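/- arXiv:2311.05208 — 7 statements merged into one kernel-verified Lean document; each statement's English description precedes it below -/
import Mathlib

section
/- If a finite positive Borel measure μ on the unit sphere S_{N-1} linearly majorizes a finite positive Borel measure ν on S_{N-1}, then for every sublinear function p : ℝ^N → ℝ one has ∫_{S_{N-1}} p dμ ≥ ∫_{S_{N-1}} p dν. -/
open MeasureTheory

/-- A finite positive Borel measure `μ` on the unit sphere `S_{N-1}` linearly majorizes `ν`
if for every decomposition of the sphere into finitely many pairwise disjoint Borel sets
`U 1, …, U m` there are finite positive measures `μs 1, …, μs m` summing to `μ` such that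
for each `k` and every linear functional `ℓ` on `ℝ^N`,
`∫ ℓ dμs k = ∫_{U k} ℓ dν`. -/
def LinearlyMajorizes (N : ℕ)
    (μ ν : Measure (Metric.sphere (0 : EuclideanSpace ℝ (Fin N)) 1)) : Prop :=
  ∀ (m : ℕ) (U : Fin m → Set (Metric.sphere (0 : EuclideanSpace ℝ (Fin N)) 1)),
    (∀ k, MeasurableSet (U k)) →
    (Pairwise fun i j => Disjoint (U i) (U j)) →
    (⋃ k, U k) = Set.univ →
    ∃ μs : Fin m → Measure (Metric.sphere (0 : EuclideanSpace ℝ (Fin N)) 1),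
      (∀ k, IsFiniteMeasure (μs k)) ∧ μ = ∑ k, μs k ∧
      ∀ (k : Fin m) (ℓ : EuclideanSpace ℝ (Fin N) →ₗ[ℝ] ℝ),
        ∫ x, ℓ (x : EuclideanSpace ℝ (Fin N)) ∂(μs k)
          = ∫ x in U k, ℓ (x : EuclideanSpace ℝ (Fin N)) ∂ν

/-- `p : ℝ^N → ℝ` is sublinear: positively homogeneous and subadditive. -/
def Sublinear (N : ℕ) (p : EuclideanSpace ℝ (Fin N) → ℝ) : Prop :=
  (∀ t : ℝ, 0 ≤ t → ∀ x, p (t • x) = t * p x) ∧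
  (∀ x y, p (x + y) ≤ p x + p y)

theorem sublinear_zero {N : ℕ} {p : EuclideanSpace ℝ (Fin N) → ℝ} (hp : Sublinear N p) :
    p 0 = 0 := by
  have := hp.1 0 le_rfl 0
  simpa using this

theorem sublinear_bound {N : ℕ} {p : EuclideanSpace ℝ (Fin N) → ℝ} (hp : Sublinear N p) :
    ∃ M : ℝ, 0 ≤ M ∧ ∀ z, p z ≤ M * ‖z‖ := by
  classical
  set e : Fin N → EuclideanSpace ℝ (Fin N) := fun i => EuclideanSpace.single i 1 with he
  refine ⟨∑ i, (|p (e i)| + |p (-e i)|), Finset.sum_nonneg fun i _ => by positivity, fun z => ?_⟩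
  have hrepr : ∑ i, z i • e i = z := by
    simpa [he, EuclideanSpace.basisFun_apply, EuclideanSpace.basisFun_repr]
      using (EuclideanSpace.basisFun (Fin N) ℝ).sum_repr z
  have hcoord : ∀ i, |z i| ≤ ‖z‖ := by
    intro i
    rw [EuclideanSpace.norm_eq]
    calc |z i| = Real.sqrt (‖z i‖ ^ 2) := by
          rw [Real.sqrt_sq_eq_abs]; simp
      _ ≤ _ := by
          apply Real.sqrt_le_sqrt
          exact Finset.single_le_sum (f := fun j => ‖z j‖ ^ 2)
            (fun j _ => by positivity) (Finset.mem_univ i)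
  calc p z = p (∑ i, z i • e i) := by rw [hrepr]
    _ ≤ ∑ i, p (z i • e i) :=
        Finset.le_sum_of_subadditive p (sublinear_zero hp).le hp.2 _ _
    _ ≤ ∑ i, (|p (e i)| + |p (-e i)|) * ‖z‖ := by
        refine Finset.sum_le_sum fun i _ => ?_
        rcases le_or_gt 0 (z i) with hz | hz
        · rw [hp.1 _ hz]
          calc z i * p (e i) ≤ |z i| * |p (e i)| := by
                rcases le_or_gt 0 (p (e i)) with h | h
                · exact mul_le_mul (le_abs_self _) (le_abs_self _) h (abs_nonneg _)
                · nlinarith [abs_nonneg (z i), abs_nonneg (p (e i)), le_abs_self (p (e i))]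
            _ ≤ (|p (e i)| + |p (-e i)|) * ‖z‖ := by
                rw [mul_comm (|z i|)]
                exact mul_le_mul (by nlinarith [abs_nonneg (p (-e i))]) (hcoord i)
                  (abs_nonneg _) (by positivity)
        · have : z i • e i = (-z i) • (-e i) := by rw [neg_smul, smul_neg, neg_neg]
          rw [this, hp.1 _ (by linarith)]
          calc (-z i) * p (-e i) ≤ |z i| * |p (-e i)| := by
                rcases le_or_gt 0 (p (-e i)) with h | h
                · exact mul_le_mul (by rw [abs_of_neg hz]) (le_abs_self _) h (abs_nonneg _)
                · nlinarith [abs_nonneg (z i), abs_nonneg (p (-e i)), mul_pos (neg_pos.2 hz) (neg_pos.2 h)]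
            _ ≤ (|p (e i)| + |p (-e i)|) * ‖z‖ := by
                rw [mul_comm (|z i|)]
                exact mul_le_mul (by nlinarith [abs_nonneg (p (e i))]) (hcoord i)
                  (abs_nonneg _) (by positivity)
    _ = (∑ i, (|p (e i)| + |p (-e i)|)) * ‖z‖ := by rw [Finset.sum_mul]

theorem sublinear_support {N : ℕ} {p : EuclideanSpace ℝ (Fin N) → ℝ} (hp : Sublinear N p)
    (x : EuclideanSpace ℝ (Fin N)) (hx : x ≠ 0) :
    ∃ ℓ : EuclideanSpace ℝ (Fin N) →ₗ[ℝ] ℝ, (∀ z, ℓ z ≤ p z) ∧ ℓ x = p x := by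
  have hp0 : p 0 = 0 := by simpa using hp.1 0 le_rfl 0
  set f := LinearPMap.mkSpanSingleton (K := ℝ) (σ := RingHom.id ℝ) x (p x) hx with hf
  have hdom : ∀ y : f.domain, f y ≤ p y := by
    rintro ⟨y, hy⟩
    rcases Submodule.mem_span_singleton.1 hy with ⟨a, rfl⟩
    have happ : f ⟨a • x, hy⟩ = a • p x := LinearPMap.mkSpanSingleton'_apply x (p x) _ a hy
    rw [happ]
    rcases le_or_gt 0 a with ha | ha
    · rw [hp.1 a ha x]; simp [smul_eq_mul]
    · have h1 : 0 ≤ p (a • x) + p (-(a • x)) := by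
        have h := hp.2 (a • x) (-(a • x))
        rw [add_neg_cancel, hp0] at h
        linarith
      have h2 : p (-(a • x)) = (-a) * p x := by
        rw [← neg_smul]; exact hp.1 (-a) (by linarith) x
      simp only [smul_eq_mul]
      nlinarith
  obtain ⟨g, hg1, hg2⟩ := exists_extension_of_le_sublinear f p
    (fun c hc y => hp.1 c hc.le y) hp.2 hdom
  refine ⟨g, hg2, ?_⟩
  have := hg1 ⟨x, Submodule.mem_span_singleton_self x⟩
  rw [this, LinearPMap.mkSpanSingleton_apply]


theorem exists_fine_partition {α : Type*} [MetricSpace α] [CompactSpace α]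
    [MeasurableSpace α] [BorelSpace α] (δ : ℝ) (hδ : 0 < δ) :
    ∃ (m : ℕ) (c : Fin m → α) (U : Fin m → Set α),
      (∀ k, MeasurableSet (U k)) ∧ (Pairwise fun i j => Disjoint (U i) (U j)) ∧
      (⋃ k, U k) = Set.univ ∧ ∀ k, U k ⊆ Metric.ball (c k) δ := by
  classical
  obtain ⟨t, ht⟩ := isCompact_univ.elim_finite_subcover (fun x : α => Metric.ball x δ)
    (fun x => Metric.isOpen_ball) (fun x _ => Set.mem_iUnion.2 ⟨x, Metric.mem_ball_self hδ⟩)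
  set m := t.card with hm
  set e := t.equivFin with he
  set B : ℕ → Set α := fun n => if h : n < m then Metric.ball ((e.symm ⟨n, h⟩ : α)) δ else ∅
    with hB
  have hBmeas : ∀ n, MeasurableSet (B n) := by
    intro n
    by_cases h : n < m
    · simp only [hB, dif_pos h]; exact Metric.isOpen_ball.measurableSet
    · simp only [hB, dif_neg h]; exact MeasurableSet.empty
  refine ⟨m, fun k => e.symm k, fun k => disjointed B k, ?_, ?_, ?_, ?_⟩
  · exact fun k => MeasurableSet.disjointed hBmeas k
  · intro i j hij
    exact disjoint_disjointed B (fun h => hij (Fin.ext h))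
  · apply Set.eq_univ_of_univ_subset
    intro x _
    have hx : x ∈ ⋃ n, B n := by
      rcases Set.mem_iUnion₂.1 (ht (Set.mem_univ x)) with ⟨c, hc, hxc⟩
      refine Set.mem_iUnion.2 ⟨(e ⟨c, hc⟩ : ℕ), ?_⟩
      have h : ((e ⟨c, hc⟩ : Fin m) : ℕ) < m := (e ⟨c, hc⟩).isLt
      simp only [hB, dif_pos h, Fin.eta, Equiv.symm_apply_apply]
      exact hxc
    rw [← iUnion_disjointed] at hx
    rcases Set.mem_iUnion.1 hx with ⟨n, hn⟩
    have hnm : n < m := by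
      by_contra h
      have := disjointed_subset B n hn
      simp only [hB, dif_neg h] at this
      exact this
    exact Set.mem_iUnion.2 ⟨⟨n, hnm⟩, hn⟩
  · intro k y hy
    have := disjointed_subset B k hy
    simpa only [hB, dif_pos k.isLt, Fin.eta] using this



theorem integrable_of_continuous_compact {α : Type*} [TopologicalSpace α] [CompactSpace α]
    [T2Space α] [MeasurableSpace α] [OpensMeasurableSpace α]
    (ρ : Measure α) [IsFiniteMeasure ρ] {f : α → ℝ} (hf : Continuous f) :
    Integrable f ρ :=
  hf.integrable_of_hasCompactSupport
    (IsCompact.of_isClosed_subset isCompact_univ (isClosed_tsupport f) (Set.subset_univ _))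


/-- If `μ` linearly majorizes `ν` on the unit sphere, then
`∫ p dμ ≥ ∫ p dν` for every sublinear `p : ℝ^N → ℝ`. -/
theorem linearlyMajorizes_integral_sublinear_le {N : ℕ}
    (μ ν : Measure (Metric.sphere (0 : EuclideanSpace ℝ (Fin N)) 1))
    [IsFiniteMeasure μ] [IsFiniteMeasure ν]
    (h : LinearlyMajorizes N μ ν)
    (p : EuclideanSpace ℝ (Fin N) → ℝ) (hp : Sublinear N p) :
    ∫ x, p (x : EuclideanSpace ℝ (Fin N)) ∂ν
      ≤ ∫ x, p (x : EuclideanSpace ℝ (Fin N)) ∂μ := by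
  classical
  obtain ⟨M, hM0, hMb⟩ := sublinear_bound hp
  have hplip : ∀ a b : EuclideanSpace ℝ (Fin N), p a - p b ≤ M * ‖a - b‖ := by
    intro a b
    have h1 := hp.2 b (a - b)
    rw [add_sub_cancel] at h1
    linarith [hMb (a - b)]
  have hpcont : Continuous p := by
    have : LipschitzWith M.toNNReal p := by
      apply LipschitzWith.of_dist_le_mul
      intro a b
      rw [Real.dist_eq, Real.coe_toNNReal M hM0, dist_eq_norm, abs_le]
      constructor
      · have := hplip b a; rw [norm_sub_rev] at this; linarith
      · linarith [hplip a b]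
    exact this.continuous
  have hintp : ∀ (ρ : Measure (Metric.sphere (0 : EuclideanSpace ℝ (Fin N)) 1))
      [IsFiniteMeasure ρ], Integrable (fun x : Metric.sphere (0 : EuclideanSpace ℝ (Fin N)) 1
        => p (x : EuclideanSpace ℝ (Fin N))) ρ := by
    intro ρ _
    exact integrable_of_continuous_compact ρ (hpcont.comp continuous_subtype_val)
  have hintl : ∀ (ρ : Measure (Metric.sphere (0 : EuclideanSpace ℝ (Fin N)) 1))
      [IsFiniteMeasure ρ] (ℓ : EuclideanSpace ℝ (Fin N) →ₗ[ℝ] ℝ),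
      Integrable (fun x : Metric.sphere (0 : EuclideanSpace ℝ (Fin N)) 1
        => ℓ (x : EuclideanSpace ℝ (Fin N))) ρ := by
    intro ρ _ ℓ
    exact integrable_of_continuous_compact ρ
      ((ℓ.continuous_of_finiteDimensional).comp continuous_subtype_val)
  refine le_of_forall_pos_le_add fun ε hε => ?_
  set νT := (ν Set.univ).toReal with hνT
  have hνT0 : 0 ≤ νT := ENNReal.toReal_nonneg
  set δ := ε / (2 * M * νT + 1) with hδdef
  have hδ : 0 < δ := div_pos hε (by positivity)
  obtain ⟨m, c, U, hUmeas, hUdisj, hUunion, hUball⟩ :=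
    exists_fine_partition (α := Metric.sphere (0 : EuclideanSpace ℝ (Fin N)) 1) δ hδ
  obtain ⟨μs, hμsfin, hμsum, hμseq⟩ := h m U hUmeas hUdisj hUunion
  have hc : ∀ k, ((c k : EuclideanSpace ℝ (Fin N))) ≠ 0 :=
    fun k => ne_zero_of_mem_unit_sphere (c k)
  choose ℓ hℓle hℓeq using fun k => sublinear_support hp (c k) (hc k)
  have key : ∀ k, ∀ y ∈ U k,
      p (y : EuclideanSpace ℝ (Fin N)) ≤ ℓ k (y : EuclideanSpace ℝ (Fin N)) + 2 * M * δ := by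
    intro k y hy
    have hd : ‖(y : EuclideanSpace ℝ (Fin N)) - c k‖ < δ := by
      have := hUball k hy
      rwa [Metric.mem_ball, Subtype.dist_eq, dist_eq_norm] at this
    have h1 : p (y : EuclideanSpace ℝ (Fin N)) - p (c k : EuclideanSpace ℝ (Fin N))
        ≤ M * ‖(y : EuclideanSpace ℝ (Fin N)) - c k‖ := hplip _ _
    have h2 : ℓ k ((c k : EuclideanSpace ℝ (Fin N)) - y)
        ≤ M * ‖(c k : EuclideanSpace ℝ (Fin N)) - (y : EuclideanSpace ℝ (Fin N))‖ :=
      (hℓle k _).trans (hMb _)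
    rw [map_sub, norm_sub_rev] at h2
    have h3 := hℓeq k
    nlinarith [mul_le_mul_of_nonneg_left hd.le hM0]
  have hdecomp : ∫ x, p (x : EuclideanSpace ℝ (Fin N)) ∂ν
      = ∑ k, ∫ x in U k, p (x : EuclideanSpace ℝ (Fin N)) ∂ν := by
    rw [← setIntegral_univ, ← hUunion,
      integral_iUnion hUmeas hUdisj ((hintp ν).integrableOn), tsum_fintype]
  have step : ∀ k, ∫ x in U k, p (x : EuclideanSpace ℝ (Fin N)) ∂ν
      ≤ ∫ x, p (x : EuclideanSpace ℝ (Fin N)) ∂(μs k) + 2 * M * δ * (ν (U k)).toReal := by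
    intro k
    haveI := hμsfin k
    calc ∫ x in U k, p (x : EuclideanSpace ℝ (Fin N)) ∂ν
        ≤ ∫ x in U k, (ℓ k (x : EuclideanSpace ℝ (Fin N)) + 2 * M * δ) ∂ν := by
          apply setIntegral_mono_on ((hintp ν).integrableOn)
            (((hintl ν (ℓ k)).add (integrable_const _)).integrableOn) (hUmeas k)
          exact fun x hx => key k x hx
      _ = ∫ x in U k, ℓ k (x : EuclideanSpace ℝ (Fin N)) ∂ν + 2 * M * δ * (ν (U k)).toReal := by
          rw [integral_add ((hintl ν (ℓ k)).integrableOn) (integrable_const _),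
            setIntegral_const, smul_eq_mul, measureReal_def]
          ring
      _ = ∫ x, ℓ k (x : EuclideanSpace ℝ (Fin N)) ∂(μs k) + 2 * M * δ * (ν (U k)).toReal := by
          rw [hμseq k (ℓ k)]
      _ ≤ ∫ x, p (x : EuclideanSpace ℝ (Fin N)) ∂(μs k) + 2 * M * δ * (ν (U k)).toReal := by
          apply add_le_add_left
          exact integral_mono (hintl (μs k) (ℓ k)) (hintp (μs k)) fun x => hℓle k _
  have hsum1 : ∑ k, ∫ x, p (x : EuclideanSpace ℝ (Fin N)) ∂(μs k)
      = ∫ x, p (x : EuclideanSpace ℝ (Fin N)) ∂μ := by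
    rw [hμsum]
    exact (integral_finset_sum_measure fun k _ => by haveI := hμsfin k; exact hintp (μs k)).symm
  have hsum2 : ∑ k, (ν (U k)).toReal = νT := by
    rw [hνT, ← hUunion, measure_iUnion hUdisj hUmeas, tsum_fintype,
      ENNReal.toReal_sum fun k _ => measure_ne_top ν (U k)]
  have hδε : 2 * M * δ * νT ≤ ε := by
    have hne : 2 * M * νT + 1 ≠ 0 := by positivity
    have heq : (2 * M * νT + 1) * δ = ε := by
      rw [hδdef]; field_simp
    nlinarith [hδ.le]
  calc ∫ x, p (x : EuclideanSpace ℝ (Fin N)) ∂ν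
      = ∑ k, ∫ x in U k, p (x : EuclideanSpace ℝ (Fin N)) ∂ν := hdecomp
    _ ≤ ∑ k, (∫ x, p (x : EuclideanSpace ℝ (Fin N)) ∂(μs k) + 2 * M * δ * (ν (U k)).toReal) :=
        Finset.sum_le_sum fun k _ => step k
    _ = ∫ x, p (x : EuclideanSpace ℝ (Fin N)) ∂μ + 2 * M * δ * νT := by
        rw [Finset.sum_add_distrib, hsum1, ← Finset.mul_sum, hsum2]
    _ ≤ ∫ x, p (x : EuclideanSpace ℝ (Fin N)) ∂μ + ε := by linarith
end

section
/- Let Q be a compact convex subset of a locally convex real topological vector space X, and let μ and ν be finite positive Borel measures on Q. If μ affinely majorizes ν, then ∫_Q f dμ ≥ ∫_Q f dν for every continuous convex function f : Q → ℝ. -/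
open MeasureTheory

open Set Filter Topology Pointwise

section CFMAux

lemma aux_closure_subset_add {X : Type*} [AddCommGroup X] [TopologicalSpace X]
    [IsTopologicalAddGroup X] (s t : Set X) (ht : t ∈ 𝓝 (0 : X)) : closure s ⊆ s + t := by
  intro x hx
  have hcont : Continuous fun y : X => x - y := continuous_const.sub continuous_id
  have hmem : (fun y : X => x - y) ⁻¹' t ∈ 𝓝 x := by
    have := hcont.continuousAt (x := x)
    apply this.preimage_mem_nhds
    simpa using ht
  rcases mem_closure_iff_nhds.mp hx _ hmem with ⟨y, hyt, hys⟩
  exact ⟨y, hys, x - y, hyt, by show y + (x - y) = x; abel⟩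

lemma aux_integrable {α : Type*} [TopologicalSpace α] [CompactSpace α] [MeasurableSpace α]
    [OpensMeasurableSpace α] (g : α → ℝ) (hg : Continuous g) (μ : Measure α)
    [IsFiniteMeasure μ] : Integrable g μ := by
  obtain ⟨C, hC⟩ : ∃ C, ∀ x, ‖g x‖ ≤ C := by
    rcases (isCompact_range hg.norm).bddAbove with ⟨C, hC⟩
    exact ⟨C, fun x => hC ⟨x, rfl⟩⟩
  exact (integrable_const C).mono' hg.aestronglyMeasurable (ae_of_all _ hC)

lemma aux_affine {X : Type*} [AddCommGroup X] [Module ℝ X] [TopologicalSpace X]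
    [IsTopologicalAddGroup X] [ContinuousSMul ℝ X] [LocallyConvexSpace ℝ X]
    (Q K : Set X) (f : X → ℝ) (hfc : ContinuousOn f Q) (hfconv : ConvexOn ℝ Q f)
    (hKQ : K ⊆ Q) (hKcomp : IsCompact K) (hKconv : Convex ℝ K) (hKne : K.Nonempty)
    (c : ℝ) (hc : ∀ z ∈ K, c < f z) :
    ∃ a : X → ℝ, Continuous a ∧
      (∀ (x y : X) (t : ℝ), a (t • x + (1 - t) • y) = t * a x + (1 - t) * a y) ∧
      (∀ x ∈ Q, a x ≤ f x) ∧ (∀ z ∈ K, c ≤ a z) := by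
  set Epi : Set (X × ℝ) := {p : X × ℝ | p.1 ∈ Q ∧ f p.1 ≤ p.2} with hEpi
  set E : Set (X × ℝ) := closure Epi with hE
  have hEconv : Convex ℝ E := hfconv.convex_epigraph.closure
  set S : Set (X × ℝ) := K ×ˢ ({c} : Set ℝ) with hS
  have hSconv : Convex ℝ S := hKconv.prod (convex_singleton c)
  have hScomp : IsCompact S := hKcomp.prod isCompact_singleton
  have disj : Disjoint S E := by
    rw [Set.disjoint_left]
    rintro ⟨z, t⟩ ⟨hzK, htc⟩ hEmem
    simp only [Set.mem_singleton_iff] at htc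
    rw [htc] at hEmem
    -- show f z ≤ c, contradicting hc
    have hfz : ∀ δ : ℝ, 0 < δ → f z < c + 2 * δ := by
      intro δ hδ
      have hcw : ContinuousWithinAt f Q z := hfc z (hKQ hzK)
      have hpre : f ⁻¹' Ioi (f z - δ) ∈ 𝓝[Q] z := hcw (Ioi_mem_nhds (by linarith))
      rcases mem_nhdsWithin.mp hpre with ⟨u, huo, hzu, husub⟩
      have hopen : IsOpen (u ×ˢ Iio (c + δ)) := huo.prod isOpen_Iio
      have hzmem : (z, c) ∈ u ×ˢ Iio (c + δ) := ⟨hzu, by simp; linarith⟩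
      rcases mem_closure_iff.mp hEmem _ hopen hzmem with ⟨⟨x, s⟩, ⟨hxu, hs⟩, hxQ, hfxs⟩
      have h1 : f z - δ < f x := husub ⟨hxu, hxQ⟩
      simp only [mem_Iio] at hs
      linarith
    have hle : f z ≤ c := by
      by_contra hlt
      push_neg at hlt
      have := hfz ((f z - c) / 2) (by linarith)
      linarith
    exact absurd hle (not_le.mpr (hc z hzK))
  obtain ⟨L, u, v, hLu, huv, hLv⟩ :=
    geometric_hahn_banach_compact_closed hSconv hScomp hEconv isClosed_closure disj
  set r : ℝ := L ((0 : X), (1 : ℝ)) with hr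
  have hL : ∀ (x : X) (t : ℝ), L (x, t) = L (x, 0) + t * r := by
    intro x t
    have hdecomp : ((x, t) : X × ℝ) = (x, 0) + t • ((0 : X), (1 : ℝ)) := by
      simp [Prod.ext_iff]
    rw [hdecomp, map_add, L.map_smul, smul_eq_mul]
  obtain ⟨z0, hz0⟩ := hKne
  have hz0Q : z0 ∈ Q := hKQ hz0
  have hrpos : 0 < r := by
    rcases lt_trichotomy r 0 with hneg | hzero | hpos
    · exfalso
      set t := max (f z0) ((v - L (z0, 0)) / r) with htdef
      have htm : (z0, t) ∈ E := subset_closure ⟨hz0Q, le_max_left _ _⟩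
      have h1 : v < L (z0, t) := hLv _ htm
      rw [hL] at h1
      have h2 : (v - L (z0, 0)) / r ≤ t := le_max_right _ _
      have h3 : t * r ≤ (v - L (z0, 0)) / r * r := mul_le_mul_of_nonpos_right h2 hneg.le
      rw [div_mul_cancel₀ _ hneg.ne] at h3
      linarith
    · exfalso
      have h1 : L (z0, c) < u := hLu _ ⟨hz0, rfl⟩
      have h2 : v < L (z0, f z0) := hLv _ (subset_closure ⟨hz0Q, le_refl _⟩)
      rw [hL, hzero] at h1 h2
      linarith
    · exact hpos
  refine ⟨fun x => (v - L (x, 0)) / r, ?_, ?_, ?_, ?_⟩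
  · exact (continuous_const.sub (L.continuous.comp
      (continuous_id.prodMk continuous_const))).div_const r
  · intro x y t
    dsimp only
    have hdecomp : ((t • x + (1 - t) • y, (0 : ℝ)) : X × ℝ)
        = t • (x, (0 : ℝ)) + (1 - t) • (y, (0 : ℝ)) := by
      simp [Prod.ext_iff]
    rw [hdecomp, map_add, L.map_smul, L.map_smul, smul_eq_mul, smul_eq_mul]
    field_simp
    ring
  · intro x hx
    have h1 : v < L (x, f x) := hLv _ (subset_closure ⟨hx, le_refl _⟩)
    rw [hL] at h1
    rw [div_le_iff₀ hrpos]
    nlinarith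
  · intro z hz
    have h1 : L (z, c) < u := hLu _ ⟨hz, rfl⟩
    rw [hL] at h1
    rw [le_div_iff₀ hrpos]
    nlinarith

end CFMAux

/-- A finite positive Borel measure `μ` on a compact convex set `Q` affinely majorizes `ν`
if for every decomposition `ν = νs 1 + … + νs m` into finitely many finite positive measures
there are finite positive measures `μs 1, …, μs m` summing to `μ` such that for each `k`,
`∫ a dμs k = ∫ a dνs k` for every continuous affine function `a : X → ℝ`. -/
def AffinelyMajorizes {X : Type*} [AddCommGroup X] [Module ℝ X] [TopologicalSpace X]
    [MeasurableSpace X] (Q : Set X) (μ ν : Measure Q) : Prop :=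
  ∀ (m : ℕ) (νs : Fin m → Measure Q),
    (∀ k, IsFiniteMeasure (νs k)) → ν = ∑ k, νs k →
    ∃ μs : Fin m → Measure Q,
      (∀ k, IsFiniteMeasure (μs k)) ∧ μ = ∑ k, μs k ∧
      ∀ (k : Fin m) (a : X → ℝ), Continuous a →
        (∀ (x y : X) (t : ℝ), a (t • x + (1 - t) • y) = t * a x + (1 - t) * a y) →
        ∫ x, a (x : X) ∂(μs k) = ∫ x, a (x : X) ∂(νs k)

/-- Cartier–Fell–Meyer, sufficiency: if `μ` affinely majorizes `ν` on a compact convex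
subset `Q` of a locally convex space, then `∫ f dμ ≥ ∫ f dν` for every continuous convex
function `f` on `Q`. -/
theorem integral_convexOn_le_of_affinelyMajorizes
    {X : Type*} [AddCommGroup X] [Module ℝ X] [TopologicalSpace X]
    [IsTopologicalAddGroup X] [ContinuousSMul ℝ X] [LocallyConvexSpace ℝ X]
    [MeasurableSpace X] [BorelSpace X]
    (Q : Set X) (hQc : IsCompact Q) (hQconv : Convex ℝ Q)
    (μ ν : Measure Q) [IsFiniteMeasure μ] [IsFiniteMeasure ν]
    (h : AffinelyMajorizes Q μ ν)
    (f : X → ℝ) (hfc : ContinuousOn f Q) (hfconv : ConvexOn ℝ Q f) :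
    ∫ x, f (x : X) ∂ν ≤ ∫ x, f (x : X) ∂μ := by
  classical
  haveI : CompactSpace ↥Q := isCompact_iff_compactSpace.mp hQc
  set F : Q → ℝ := fun q => f q with hF
  have hFc : Continuous F := hfc.restrict
  have hInt : ∀ (ρ : Measure ↥Q), IsFiniteMeasure ρ → Integrable F ρ := by
    intro ρ hρ
    exact @aux_integrable _ _ _ _ _ F hFc ρ hρ
  have main : ∀ ε : ℝ, 0 < ε →
      ∫ x, f (x : X) ∂ν ≤ ∫ x, f (x : X) ∂μ + 3 * ε * (ν Set.univ).toReal := by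
    intro ε hε
    -- for each x a convex neighborhood of 0 controlling the oscillation of f near x
    have key : ∀ x : X, ∃ V : Set X, V ∈ 𝓝 (0 : X) ∧ Convex ℝ V ∧
        (x ∈ Q → ∀ y ∈ Q, y - x ∈ V → |f y - f x| ≤ ε) := by
      intro x
      by_cases hx : x ∈ Q
      · have hcw : ContinuousWithinAt f Q x := hfc x hx
        have hpre : f ⁻¹' Metric.ball (f x) ε ∈ 𝓝[Q] x := hcw (Metric.ball_mem_nhds _ hε)
        rcases mem_nhdsWithin.mp hpre with ⟨o, hoo, hxo, hosub⟩
        have h0 : (fun y : X => y + x) ⁻¹' o ∈ 𝓝 (0 : X) := by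
          apply (continuous_id.add continuous_const).continuousAt.preimage_mem_nhds
          simpa using hoo.mem_nhds hxo
        rcases (locallyConvexSpace_iff_exists_convex_subset_zero ℝ X).mp inferInstance _ h0
          with ⟨V, hV0, hVconv, hVsub⟩
        refine ⟨V, hV0, hVconv, fun _ y hy hmem => ?_⟩
        have hyo : y ∈ o := by
          have := hVsub hmem
          simpa using this
        have := hosub ⟨hyo, hy⟩
        simp only [Set.mem_preimage, Metric.mem_ball, Real.dist_eq] at this
        exact this.le
      · exact ⟨Set.univ, Filter.univ_mem, convex_univ, fun hx' => absurd hx' hx⟩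
    choose V hV0 hVconv hVf using key
    set W : X → Set X := fun x => {y : X | y - x ∈ interior ((2⁻¹ : ℝ) • V x)} with hW
    have hWopen : ∀ x, IsOpen (W x) := by
      intro x
      exact isOpen_interior.preimage (continuous_sub_right x)
    have hWnhds : ∀ x ∈ Q, W x ∈ 𝓝 x := by
      intro x hx
      have hhalf : (2⁻¹ : ℝ) • V x ∈ 𝓝 (0 : X) :=
        (set_smul_mem_nhds_zero_iff (by norm_num : (2⁻¹ : ℝ) ≠ 0)).mpr (hV0 x)
      have hxW : x ∈ W x := by
        show x - x ∈ interior ((2⁻¹ : ℝ) • V x)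
        rw [sub_self]
        exact mem_interior_iff_mem_nhds.mpr hhalf
      exact (hWopen x).mem_nhds hxW
    obtain ⟨tf, htfQ, htfcover⟩ := hQc.elim_nhds_subcover W hWnhds
    set m := tf.card with hm
    set e := tf.equivFin with he
    set p : Fin m → X := fun k => ((e.symm k : X)) with hp
    have hpQ : ∀ k, p k ∈ Q := fun k => htfQ _ (e.symm k).2
    set B : Fin m → Set ↥Q := fun k => (fun q : ↥Q => (q : X)) ⁻¹' W (p k) with hB
    have hBmeas : ∀ k, MeasurableSet (B k) :=
      fun k => ((hWopen (p k)).measurableSet).preimage measurable_subtype_coe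
    have hBcover : ∀ q : ↥Q, ∃ k, q ∈ B k := by
      intro q
      rcases Set.mem_iUnion₂.mp (htfcover q.2) with ⟨x, hxt, hqx⟩
      refine ⟨e ⟨x, hxt⟩, ?_⟩
      show (q : X) ∈ W (p (e ⟨x, hxt⟩))
      have hpe : p (e ⟨x, hxt⟩) = x := by
        simp [hp, Equiv.symm_apply_apply]
      rw [hpe]
      exact hqx
    set A : Fin m → Set ↥Q := fun k => B k \ ⋃ (j : Fin m) (_ : j < k), B j with hA
    have hAB : ∀ k, A k ⊆ B k := fun k => Set.diff_subset
    have hAmeas : ∀ k, MeasurableSet (A k) :=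
      fun k => (hBmeas k).diff
        (MeasurableSet.iUnion fun j => MeasurableSet.iUnion fun _ => hBmeas j)
    have hAdisj' : ∀ j k : Fin m, j < k → Disjoint (A j) (A k) := by
      intro j k hjk
      rw [Set.disjoint_left]
      rintro q hqj ⟨hqB, hqN⟩
      exact hqN (Set.mem_iUnion₂.mpr ⟨j, hjk, hqj.1⟩)
    have hAdisj : Pairwise (Function.onFun Disjoint A) := by
      intro j k hjk
      rcases hjk.lt_or_gt with hlt | hlt
      · exact hAdisj' j k hlt
      · exact (hAdisj' k j hlt).symm
    have hAunion : ⋃ k, A k = Set.univ := by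
      ext q
      simp only [Set.mem_univ, iff_true, Set.mem_iUnion]
      obtain ⟨k, hk⟩ := hBcover q
      set s := Finset.univ.filter (fun k => q ∈ B k) with hs
      have hne : s.Nonempty := ⟨k, by simp [hs, hk]⟩
      refine ⟨s.min' hne, ?_, ?_⟩
      · have := s.min'_mem hne
        simp only [hs, Finset.mem_filter, Finset.mem_univ, true_and] at this
        exact this
      · intro hmem
        rcases Set.mem_iUnion₂.mp hmem with ⟨j, hj, hqj⟩
        have : s.min' hne ≤ j := s.min'_le j (by simp [hs, hqj])
        exact absurd hj (not_lt.mpr this)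
    set νs : Fin m → Measure ↥Q := fun k => ν.restrict (A k) with hνs
    have hνsf : ∀ k, IsFiniteMeasure (νs k) := fun k => inferInstance
    have hsum : ν = ∑ k, νs k := by
      ext s hs
      rw [Measure.finset_sum_apply]
      have h1 : ⋃ k, s ∩ A k = s := by
        rw [← Set.inter_iUnion, hAunion, Set.inter_univ]
      have h2 : ν (⋃ k, s ∩ A k) = ∑' k, ν (s ∩ A k) :=
        measure_iUnion
          (fun i j hij => (hAdisj hij).mono Set.inter_subset_right Set.inter_subset_right)
          (fun k => hs.inter (hAmeas k))
      rw [h1] at h2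
      rw [h2, tsum_fintype]
      exact Finset.sum_congr rfl fun k _ => (Measure.restrict_apply hs).symm
    obtain ⟨μs, hμsf, hμsum, hμν⟩ := h m νs hνsf hsum
    have hkey : ∀ k, ∫ q, F q ∂(νs k) ≤ ∫ q, F q ∂(μs k) + 3 * ε * ((νs k) Set.univ).toReal := by
      intro k
      haveI := hμsf k
      have hmass : (μs k) Set.univ = (νs k) Set.univ := by
        have h1 := hμν k (fun _ => 1) continuous_const (by intro x y t; ring)
        simp only [integral_const, smul_eq_mul, mul_one] at h1
        exact (ENNReal.toReal_eq_toReal_iff' (measure_ne_top _ _) (measure_ne_top _ _)).mp h1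
      by_cases hz : ν (A k) = 0
      · have hν0 : νs k = 0 := Measure.restrict_eq_zero.mpr hz
        have hμ0 : μs k = 0 := by
          rw [← Measure.measure_univ_eq_zero, hmass, hν0]
          simp
        rw [hν0, hμ0]
        simp
      · obtain ⟨q0, hq0⟩ := nonempty_of_measure_ne_zero hz
        set xk := p k with hxk
        set c := f xk - 2 * ε with hc
        have hhalf : (2⁻¹ : ℝ) • V xk ∈ 𝓝 (0 : X) :=
          (set_smul_mem_nhds_zero_iff (by norm_num : (2⁻¹ : ℝ) ≠ 0)).mpr (hV0 xk)
        have hclsub : closure ((2⁻¹ : ℝ) • V xk) ⊆ V xk := by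
          have h1 := aux_closure_subset_add ((2⁻¹ : ℝ) • V xk) ((2⁻¹ : ℝ) • V xk) hhalf
          have h2 : (2⁻¹ : ℝ) • V xk + (2⁻¹ : ℝ) • V xk = V xk := by
            rw [← Convex.add_smul (hVconv xk) (by norm_num : (0:ℝ) ≤ 2⁻¹)
              (by norm_num : (0:ℝ) ≤ 2⁻¹)]
            norm_num
          rwa [h2] at h1
        set K : Set X := Q ∩ {y : X | y - xk ∈ closure ((2⁻¹ : ℝ) • V xk)} with hK
        have hKQ : K ⊆ Q := Set.inter_subset_left
        have hosc : ∀ y ∈ K, |f y - f xk| ≤ ε := fun y hy =>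
          hVf xk (hpQ k) y hy.1 (hclsub hy.2)
        have hKcomp : IsCompact K :=
          hQc.inter_right (isClosed_closure.preimage (continuous_sub_right xk))
        have hKconv : Convex ℝ K := by
          refine hQconv.inter ?_
          have hCc : Convex ℝ (closure ((2⁻¹ : ℝ) • V xk)) := ((hVconv xk).smul _).closure
          intro y hy z hz av bv ha hb hab
          show av • y + bv • z - xk ∈ closure ((2⁻¹ : ℝ) • V xk)
          have h2 : av • (y - xk) + bv • (z - xk) = av • y + bv • z - (av + bv) • xk := by
            rw [smul_sub, smul_sub, add_smul]
            abel
          have h3 : av • y + bv • z - xk = av • (y - xk) + bv • (z - xk) := by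
            rw [h2, hab, one_smul]
          rw [h3]
          exact hCc hy hz ha hb hab
        have hBK : ∀ q : ↥Q, q ∈ B k → (q : X) ∈ K := by
          intro q hq
          exact ⟨q.2, subset_closure (interior_subset hq)⟩
        have hKne : K.Nonempty := ⟨(q0 : X), hBK q0 (hAB k hq0)⟩
        have hcK : ∀ z ∈ K, c < f z := by
          intro z hz
          have := hosc z hz
          rw [abs_le] at this
          rw [hc]
          linarith [this.1]
        obtain ⟨a, hacont, haaff, haQ, haK⟩ :=
          aux_affine Q K f hfc hfconv hKQ hKcomp hKconv hKne c hcK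
        have haint : ∀ (ρ : Measure ↥Q), IsFiniteMeasure ρ →
            Integrable (fun q : ↥Q => a q) ρ := by
          intro ρ hρ
          exact @aux_integrable _ _ _ _ _ _ (hacont.comp continuous_subtype_val) ρ hρ
        set M := ((νs k) Set.univ).toReal with hM
        have hM0 : 0 ≤ M := ENNReal.toReal_nonneg
        have hstep1 : ∫ q, F q ∂(νs k) ≤ (f xk + ε) * M := by
          have hae : ∀ᵐ q ∂(νs k), F q ≤ f xk + ε := by
            rw [hνs]
            refine (ae_restrict_iff' (hAmeas k)).mpr (ae_of_all _ ?_)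
            intro q hq
            have hqK : (q : X) ∈ K := hBK q (hAB k hq)
            have := hosc _ hqK
            rw [abs_le] at this
            have h5 : F q - f xk ≤ ε := this.2
            linarith
          calc ∫ q, F q ∂(νs k) ≤ ∫ _, (f xk + ε) ∂(νs k) :=
                integral_mono_ae (hInt _ (hνsf k)) (integrable_const _) hae
            _ = (f xk + ε) * M := by
                rw [integral_const, smul_eq_mul, hM, measureReal_def]; ring
        have hstep2 : c * M ≤ ∫ q, a (q : X) ∂(νs k) := by
          have hae : ∀ᵐ (q : ↥Q) ∂(νs k), c ≤ a (q : X) := by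
            rw [hνs]
            refine (ae_restrict_iff' (hAmeas k)).mpr (ae_of_all _ ?_)
            intro q hq
            exact haK _ (hBK q (hAB k hq))
          calc c * M = ∫ _, c ∂(νs k) := by
                rw [integral_const, smul_eq_mul, hM, measureReal_def]; ring
            _ ≤ ∫ q, a (q : X) ∂(νs k) :=
                integral_mono_ae (integrable_const _) (haint _ (hνsf k)) hae
        have hstep3 : ∫ q, a (q : X) ∂(μs k) = ∫ q, a (q : X) ∂(νs k) :=
          hμν k a hacont haaff
        have hstep4 : ∫ q, a (q : X) ∂(μs k) ≤ ∫ q, F q ∂(μs k) :=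
          integral_mono_ae (haint _ (hμsf k)) (hInt _ (hμsf k))
            (ae_of_all _ fun q => haQ _ q.2)
        have hfe : f xk + ε = c + 3 * ε := by rw [hc]; ring
        calc ∫ q, F q ∂(νs k) ≤ (f xk + ε) * M := hstep1
          _ = c * M + 3 * ε * M := by rw [hfe]; ring
          _ ≤ ∫ q, a (q : X) ∂(νs k) + 3 * ε * M := by linarith
          _ = ∫ q, a (q : X) ∂(μs k) + 3 * ε * M := by rw [hstep3]
          _ ≤ ∫ q, F q ∂(μs k) + 3 * ε * M := by linarith
    have hlν : ∫ x, f (x : X) ∂ν = ∑ k, ∫ q, F q ∂(νs k) := by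
      conv_lhs => rw [hsum]
      exact integral_finset_sum_measure fun k _ => hInt _ (hνsf k)
    have hlμ : ∫ x, f (x : X) ∂μ = ∑ k, ∫ q, F q ∂(μs k) := by
      conv_lhs => rw [hμsum]
      exact integral_finset_sum_measure fun k _ => hInt _ (hμsf k)
    have hmsum : ∑ k, ((νs k) Set.univ).toReal = (ν Set.univ).toReal := by
      have h1 : ν Set.univ = ∑ k, (νs k) Set.univ := by
        conv_lhs => rw [hsum]
        rw [Measure.finset_sum_apply]
      rw [h1, ENNReal.toReal_sum fun k _ => measure_ne_top _ _]
    calc ∫ x, f (x : X) ∂ν = ∑ k, ∫ q, F q ∂(νs k) := hlν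
      _ ≤ ∑ k, (∫ q, F q ∂(μs k) + 3 * ε * ((νs k) Set.univ).toReal) :=
          Finset.sum_le_sum fun k _ => hkey k
      _ = ∑ k, ∫ q, F q ∂(μs k) + 3 * ε * ∑ k, ((νs k) Set.univ).toReal := by
          rw [Finset.sum_add_distrib, Finset.mul_sum]
      _ = ∫ x, f (x : X) ∂μ + 3 * ε * (ν Set.univ).toReal := by
          rw [← hlμ, hmsum]
  -- conclude by letting ε → 0
  set T := (ν Set.univ).toReal with hT
  have hT0 : 0 ≤ T := ENNReal.toReal_nonneg
  refine le_of_forall_pos_le_add ?_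
  intro ε' hε'
  have h1 : (0 : ℝ) < 3 * T + 1 := by linarith
  have h2 := main (ε' / (3 * T + 1)) (div_pos hε' h1)
  have h3 : ε' / (3 * T + 1) * (3 * T + 1) = ε' := div_mul_cancel₀ _ h1.ne'
  have h4 : 0 ≤ ε' / (3 * T + 1) := (div_pos hε' h1).le
  nlinarith [h2, h3, h4, hT0]
end

section
/- Let Q be a compact convex subset of a locally convex real topological vector space X, and let μ and ν be finite positive Borel measures on Q. If ∫_Q f dμ ≥ ∫_Q f dν for every continuous convex function f : Q → ℝ, then μ affinely majorizes ν. -/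
open MeasureTheory

open MeasureTheory Filter ENNReal

namespace CFM

variable {X : Type*} [AddCommGroup X] [Module ℝ X]

/-- The affine identity used in the statement. -/
def AffId (a : X → ℝ) : Prop :=
  ∀ (x y : X) (t : ℝ), a (t • x + (1 - t) • y) = t * a x + (1 - t) * a y

lemma AffId.zero : AffId (fun _ : X => (0:ℝ)) := fun _ _ _ => by ring

lemma AffId.add {a b : X → ℝ} (ha : AffId a) (hb : AffId b) :
    AffId (fun x => a x + b x) := fun x y t => by simp only [ha x y t, hb x y t]; ring

lemma AffId.smul {a : X → ℝ} (ha : AffId a) (c : ℝ) :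
    AffId (fun x => c * a x) := fun x y t => by simp only [ha x y t]; ring

lemma AffId.neg {a : X → ℝ} (ha : AffId a) : AffId (fun x => -(a x)) := fun x y t => by
  simp only [ha x y t]; ring

lemma AffId.sub {a b : X → ℝ} (ha : AffId a) (hb : AffId b) :
    AffId (fun x => a x - b x) := fun x y t => by simp only [ha x y t, hb x y t]; ring

lemma AffId.convexOn {Q : Set X} (hQ : Convex ℝ Q) {a : X → ℝ} (ha : AffId a) :
    ConvexOn ℝ Q a := by
  refine ⟨hQ, fun x _ y _ u v hu hv huv => ?_⟩
  have hv' : v = 1 - u := by linarith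
  subst hv'
  rw [ha x y u]
  simp [smul_eq_mul]

lemma AffId.abs_convexOn {Q : Set X} (hQ : Convex ℝ Q) {a : X → ℝ} (ha : AffId a) :
    ConvexOn ℝ Q (fun x => |a x|) := by
  have h := (ha.convexOn hQ).sup ((ha.neg).convexOn hQ)
  exact h

lemma memLp_comp {X : Type*} [TopologicalSpace X] [MeasurableSpace X] [BorelSpace X]
    {Q : Set X} [CompactSpace Q] (ρ : Measure Q) [IsFiniteMeasure ρ]
    {g : X → ℝ} (hg : Continuous g) (p : ℝ≥0∞) : MemLp (fun x : Q => g ↑x) p ρ := by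
  have hc : Continuous fun x : Q => g ↑x := hg.comp continuous_subtype_val
  obtain ⟨C, hC⟩ := isCompact_univ.exists_bound_of_continuousOn hc.continuousOn
  exact MemLp.of_bound hc.aestronglyMeasurable C (Eventually.of_forall fun x => hC x trivial)

lemma integrable_comp {X : Type*} [TopologicalSpace X] [MeasurableSpace X] [BorelSpace X]
    {Q : Set X} [CompactSpace Q] (ρ : Measure Q) [IsFiniteMeasure ρ]
    {g : X → ℝ} (hg : Continuous g) : Integrable (fun x : Q => g ↑x) ρ :=
  (memLp_comp ρ hg 1).integrable le_rfl

lemma coeFn_sup' {α E : Type*} [MeasurableSpace α] {μ : Measure α}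
    [NormedAddCommGroup E] [Lattice E] [HasSolidNorm E] [IsOrderedAddMonoid E] {p : ℝ≥0∞} [Fact (1 ≤ p)] {ι : Type*} (s : Finset ι)
    (hs : s.Nonempty) (f : ι → Lp E p μ) :
    ⇑(s.sup' hs f) =ᵐ[μ] fun x => s.sup' hs (fun j => f j x) := by
  induction hs using Finset.Nonempty.cons_induction with
  | singleton a => simp only [Finset.sup'_singleton]; exact EventuallyEq.rfl
  | cons a s ha hs ih =>
    filter_upwards [Lp.coeFn_sup (f a) (s.sup' hs f), ih] with x h1 h2
    rw [Finset.sup'_cons hs, Finset.sup'_cons hs, h1, Pi.sup_apply, h2]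

lemma continuous_sup' {ι X : Type*} [TopologicalSpace X] (s : Finset ι) (hs : s.Nonempty)
    (f : ι → X → ℝ) (hf : ∀ j, Continuous (f j)) :
    Continuous fun x => s.sup' hs (fun j => f j x) := by
  induction hs using Finset.Nonempty.cons_induction with
  | singleton a => simpa using hf a
  | cons a s ha hs ih =>
    simp only [Finset.sup'_cons hs]
    exact (hf a).max ih

lemma convexOn_sup' {ι : Type*} {Q : Set X} (hQ : Convex ℝ Q) (s : Finset ι) (hs : s.Nonempty)
    (f : ι → X → ℝ) (hf : ∀ j, ConvexOn ℝ Q (f j)) :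
    ConvexOn ℝ Q fun x => s.sup' hs (fun j => f j x) := by
  induction hs using Finset.Nonempty.cons_induction with
  | singleton a => simpa using hf a
  | cons a s ha hs ih =>
    simp only [Finset.sup'_cons hs]
    exact (hf a).sup ih

lemma coeFn_sum'' {α E : Type*} [MeasurableSpace α] {μ : Measure α}
    [NormedAddCommGroup E] {p : ℝ≥0∞} {ι : Type*} (s : Finset ι) (f : ι → Lp E p μ) :
    ⇑(∑ i ∈ s, f i) =ᵐ[μ] fun x => ∑ i ∈ s, f i x := by
  induction s using Finset.cons_induction with
  | empty => simpa [Pi.zero_def] using Lp.coeFn_zero E p μ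
  | cons a s ha ih =>
    rw [Finset.sum_cons]
    filter_upwards [Lp.coeFn_add (f a) (∑ i ∈ s, f i), ih] with x h1 h2
    simp only [Finset.sum_cons, h1, Pi.add_apply, h2]

end CFM

open MeasureTheory Filter ENNReal CFM
open scoped NNReal

set_option maxHeartbeats 2000000

/-- Cartier–Fell–Meyer, necessity: if `∫ f dμ ≥ ∫ f dν` for every continuous convex
function `f` on a compact convex subset `Q` of a locally convex space, then `μ` affinely
majorizes `ν`. -/
theorem affinelyMajorizes_of_forall_convexOn
    {X : Type*} [AddCommGroup X] [Module ℝ X] [TopologicalSpace X]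
    [IsTopologicalAddGroup X] [ContinuousSMul ℝ X] [LocallyConvexSpace ℝ X]
    [MeasurableSpace X] [BorelSpace X]
    (Q : Set X) (hQc : IsCompact Q) (hQconv : Convex ℝ Q)
    (μ ν : Measure Q) [IsFiniteMeasure μ] [IsFiniteMeasure ν]
    (h : ∀ f : X → ℝ, ContinuousOn f Q → ConvexOn ℝ Q f →
      ∫ x, f (x : X) ∂ν ≤ ∫ x, f (x : X) ∂μ) :
    AffinelyMajorizes Q μ ν := by
  haveI : CompactSpace Q := isCompact_iff_compactSpace.mp hQc
  intro m νs hνfin hνsum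
  haveI : ∀ k, IsFiniteMeasure (νs k) := hνfin
  rcases Nat.eq_zero_or_pos m with hm0 | hmpos
  · subst hm0
    have hν0 : ν = 0 := by simpa using hνsum
    have hμ0 : μ = 0 := by
      have hle := h (fun _ => (-1 : ℝ)) continuousOn_const (convexOn_const _ hQconv)
      rw [hν0] at hle
      simp only [integral_const, integral_zero_measure, smul_eq_mul, mul_neg_one,
        Measure.real, Measure.coe_zero, Pi.zero_apply, ENNReal.toReal_zero, neg_zero] at hle
      have h0 : (μ Set.univ).toReal = 0 := le_antisymm (by linarith) ENNReal.toReal_nonneg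
      refine Measure.measure_univ_eq_zero.mp ?_
      rcases (ENNReal.toReal_eq_zero_iff _).mp h0 with h' | h'
      · exact h'
      · exact absurd h' (measure_ne_top μ _)
    exact ⟨fun _ => 0, fun k => k.elim0, by rw [hμ0]; simp, fun k => k.elim0⟩
  haveI : Nonempty (Fin m) := Fin.pos_iff_nonempty.mp hmpos
  have hne : (Finset.univ : Finset (Fin m)).Nonempty := Finset.univ_nonempty
  -- a.e. description of the lattice sup' in L¹
  have coeS : ∀ f : Fin m → Lp ℝ 1 μ,
      ⇑(Finset.univ.sup' hne f) =ᵐ[μ] fun x => Finset.univ.sup' hne (fun j => f j x) :=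
    fun f => CFM.coeFn_sup' _ hne f
  have intS : ∀ f : Fin m → Lp ℝ 1 μ, Integrable (⇑(Finset.univ.sup' hne f)) μ :=
    fun _ => L1.integrable_coeFn _
  -- the sublinear functional
  have psub : ∀ f g : Fin m → Lp ℝ 1 μ,
      ∫ x, (Finset.univ.sup' hne (f + g)) x ∂μ ≤
        (∫ x, (Finset.univ.sup' hne f) x ∂μ) +
          ∫ x, (Finset.univ.sup' hne g) x ∂μ := by
    intro f g
    have hle : Finset.univ.sup' hne (f + g) ≤ Finset.univ.sup' hne f + Finset.univ.sup' hne g :=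
      Finset.sup'_le _ _ fun j _ =>
        add_le_add (Finset.le_sup' f (Finset.mem_univ j)) (Finset.le_sup' g (Finset.mem_univ j))
    calc ∫ x, (Finset.univ.sup' hne (f + g)) x ∂μ
        ≤ ∫ x, (Finset.univ.sup' hne f + Finset.univ.sup' hne g) x ∂μ :=
          integral_mono_ae (intS _) (L1.integrable_coeFn _) ((Lp.coeFn_le _ _).mpr hle)
      _ = ∫ x, ((Finset.univ.sup' hne f) x + (Finset.univ.sup' hne g) x) ∂μ :=
          integral_congr_ae (Lp.coeFn_add _ _)
      _ = _ := integral_add (intS f) (intS g)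
  have phom : ∀ c : ℝ, 0 < c → ∀ f : Fin m → Lp ℝ 1 μ,
      ∫ x, (Finset.univ.sup' hne (c • f)) x ∂μ =
        c * ∫ x, (Finset.univ.sup' hne f) x ∂μ := by
    intro c hc f
    have hae : ⇑(Finset.univ.sup' hne (c • f)) =ᵐ[μ]
        fun x => c * (Finset.univ.sup' hne f) x := by
      have h2 : ∀ᵐ x ∂μ, ∀ j, ((c • f) j) x = c * (f j) x := by
        rw [ae_all_iff]
        intro j
        filter_upwards [Lp.coeFn_smul c (f j)] with x hx
        simpa [smul_eq_mul] using hx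
      filter_upwards [coeS (c • f), h2, coeS f] with x hx1 hx2 hx3
      rw [hx1]
      have hfun : (fun j => ((c • f) j) x) = fun j => c * (f j) x := funext hx2
      have hcomp := Finset.comp_sup'_eq_sup'_comp (f := fun j : Fin m => (f j) x) hne
        (fun r : ℝ => c * r)
        (fun a b => by exact mul_max_of_nonneg _ _ hc.le)
      rw [hfun, hx3]
      exact hcomp.symm
    rw [integral_congr_ae hae, integral_const_mul]
  -- the subspace of tuples of (restrictions of) affine continuous functions
  let M : Submodule ℝ (Fin m → Lp ℝ 1 μ) :=
  { carrier := {f | ∃ a : Fin m → X → ℝ, (∀ j, Continuous (a j)) ∧ (∀ j, CFM.AffId (a j)) ∧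
      ∀ j, ⇑(f j) =ᵐ[μ] fun x => a j ↑x}
    add_mem' := by
      rintro f g ⟨a, hac, haa, hae⟩ ⟨b, hbc, hba, hbe⟩
      refine ⟨fun j x => a j x + b j x, fun j => (hac j).add (hbc j),
        fun j => (haa j).add (hba j), fun j => ?_⟩
      filter_upwards [Lp.coeFn_add (f j) (g j), hae j, hbe j] with x h1 h2 h3
      simp only [Pi.add_apply] at h1 ⊢
      rw [h1, h2, h3]
    zero_mem' := by
      refine ⟨fun _ _ => 0, fun j => continuous_const, fun j => CFM.AffId.zero, fun j => ?_⟩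
      simpa [Pi.zero_def] using Lp.coeFn_zero ℝ 1 μ
    smul_mem' := by
      rintro c f ⟨a, hac, haa, hae⟩
      refine ⟨fun j x => c * a j x, fun j => continuous_const.mul (hac j),
        fun j => (haa j).smul c, fun j => ?_⟩
      filter_upwards [Lp.coeFn_smul c (f j), hae j] with x h1 h2
      simp only [Pi.smul_apply, smul_eq_mul] at h1 ⊢
      rw [h1, h2] }
  -- well-definedness of the functional on M
  have key : ∀ a b : X → ℝ, Continuous a → Continuous b → CFM.AffId a → CFM.AffId b →
      ((fun x : Q => a ↑x) =ᵐ[μ] fun x : Q => b ↑x) →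
      ∀ j, ∫ x, a ↑x ∂(νs j) = ∫ x, b ↑x ∂(νs j) := by
    intro a b hac hbc haa hba hab j
    have habs : ConvexOn ℝ Q (fun x => |a x - b x|) := (haa.sub hba).abs_convexOn hQconv
    have hcont : Continuous fun x => |a x - b x| := (hac.sub hbc).abs
    have h0 : ∫ x : Q, |a ↑x - b ↑x| ∂μ = 0 := by
      have : (fun x : Q => |a ↑x - b ↑x|) =ᵐ[μ] fun _ => 0 := by
        filter_upwards [hab] with x hx
        simp [hx]
      rw [integral_congr_ae this, integral_const, smul_zero]
    have h1 : ∫ x : Q, |a ↑x - b ↑x| ∂ν ≤ 0 := h0 ▸ h _ hcont.continuousOn habs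
    have h2 : (fun x : Q => |a ↑x - b ↑x|) =ᵐ[ν] 0 :=
      (integral_eq_zero_iff_of_nonneg_ae (Eventually.of_forall fun x => abs_nonneg _)
        (CFM.integrable_comp ν hcont)).mp
        (le_antisymm h1 (integral_nonneg fun x => abs_nonneg _))
    have hleν : νs j ≤ ν := by
      rw [hνsum]
      refine Measure.le_iff.mpr fun s hs => ?_
      rw [Measure.finset_sum_apply]
      exact Finset.single_le_sum (f := fun i => νs i s) (fun i _ => zero_le)
        (Finset.mem_univ j)
    have h3 : (fun x : Q => |a ↑x - b ↑x|) =ᵐ[νs j] 0 := h2.filter_mono (ae_mono hleν)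
    have h4 : ∫ x : Q, (a ↑x - b ↑x) ∂(νs j) = 0 := by
      have h3' : (fun x : Q => a ↑x - b ↑x) =ᵐ[νs j] 0 := by
        filter_upwards [h3] with x hx
        have : |a ↑x - b ↑x| = 0 := hx
        simpa [abs_eq_zero] using this
      rw [integral_congr_ae h3']
      simp
    have h5 := integral_sub (CFM.integrable_comp (νs j) hac) (CFM.integrable_comp (νs j) hbc)
    rw [h4] at h5
    linarith [h5]
  have hMw : ∀ f : ↥M, ∃ a : Fin m → X → ℝ, (∀ j, Continuous (a j)) ∧ (∀ j, CFM.AffId (a j)) ∧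
      ∀ j, ((f : Fin m → Lp ℝ 1 μ) j : Q → ℝ) =ᵐ[μ] fun x => a j ↑x := fun f => f.2
  choose w wc wa we using hMw
  -- the linear functional on M
  let Lmap : ↥M →ₗ[ℝ] ℝ :=
  { toFun := fun f => ∑ j, ∫ x, w f j ↑x ∂(νs j)
    map_add' := by
      intro f g
      have hj : ∀ j, ∫ x, w (f + g) j ↑x ∂(νs j) =
          (∫ x, w f j ↑x ∂(νs j)) + ∫ x, w g j ↑x ∂(νs j) := by
        intro j
        have hstep : ∫ x, w (f + g) j ↑x ∂(νs j) = ∫ x, (w f j ↑x + w g j ↑x) ∂(νs j) := by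
          refine key _ _ (wc _ j) ((wc f j).add (wc g j)) (wa _ j) ((wa f j).add (wa g j)) ?_ j
          filter_upwards [we (f + g) j, we f j, we g j,
            Lp.coeFn_add ((f : Fin m → Lp ℝ 1 μ) j) ((g : Fin m → Lp ℝ 1 μ) j)]
            with x h1 h2 h3 h4
          rw [← h1, Pi.add_apply, ← h2, ← h3]
          exact h4
        rw [hstep, integral_add (CFM.integrable_comp _ (wc f j)) (CFM.integrable_comp _ (wc g j))]
      simp only [hj, Finset.sum_add_distrib]
    map_smul' := by
      intro c f
      have hj : ∀ j, ∫ x, w (c • f) j ↑x ∂(νs j) = c * ∫ x, w f j ↑x ∂(νs j) := by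
        intro j
        have hstep : ∫ x, w (c • f) j ↑x ∂(νs j) = ∫ x, c * w f j ↑x ∂(νs j) := by
          refine key _ _ (wc _ j) (continuous_const.mul (wc f j)) (wa _ j) ((wa f j).smul c) ?_ j
          filter_upwards [we (c • f) j, we f j,
            Lp.coeFn_smul c ((f : Fin m → Lp ℝ 1 μ) j)] with x h1 h2 h3
          rw [← h1, Pi.mul_apply, ← h2]
          simpa [smul_eq_mul] using h3
        rw [hstep, integral_const_mul]
      simp only [hj, RingHom.id_apply, smul_eq_mul, Finset.mul_sum] }
  -- the key inequality L ≤ p on M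
  have hLle : ∀ f : ↥M,
      Lmap f ≤ ∫ x, (Finset.univ.sup' hne (f : Fin m → Lp ℝ 1 μ)) x ∂μ := by
    intro f
    have hFc : Continuous fun x : X => Finset.univ.sup' hne (fun j => w f j x) :=
      CFM.continuous_sup' _ hne _ (wc f)
    have hFconv : ConvexOn ℝ Q fun x : X => Finset.univ.sup' hne (fun j => w f j x) :=
      CFM.convexOn_sup' hQconv _ hne _ (fun j => (wa f j).convexOn hQconv)
    have step1 : Lmap f ≤ ∑ j, ∫ x : Q, Finset.univ.sup' hne (fun i => w f i ↑x) ∂(νs j) := by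
      show (∑ j, ∫ x, w f j ↑x ∂(νs j)) ≤ _
      refine Finset.sum_le_sum fun j _ => integral_mono (CFM.integrable_comp (νs j) (wc f j))
        (CFM.integrable_comp (νs j) hFc) fun x => ?_
      exact Finset.le_sup' (fun i => w f i ↑x) (Finset.mem_univ j)
    have step2 : ∑ j, ∫ x : Q, Finset.univ.sup' hne (fun i => w f i ↑x) ∂(νs j) =
        ∫ x : Q, Finset.univ.sup' hne (fun i => w f i ↑x) ∂ν := by
      rw [hνsum, integral_finset_sum_measure (fun j _ => CFM.integrable_comp (νs j) hFc)]
    have step3 : ∫ x : Q, Finset.univ.sup' hne (fun i => w f i ↑x) ∂ν ≤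
        ∫ x : Q, Finset.univ.sup' hne (fun i => w f i ↑x) ∂μ :=
      h _ hFc.continuousOn hFconv
    have step4 : ∫ x : Q, Finset.univ.sup' hne (fun i => w f i ↑x) ∂μ =
        ∫ x, (Finset.univ.sup' hne (f : Fin m → Lp ℝ 1 μ)) x ∂μ := by
      refine (integral_congr_ae ?_).symm
      have h2 : ∀ᵐ x ∂μ, ∀ j, ((f : Fin m → Lp ℝ 1 μ) j) x = w f j ↑x :=
        ae_all_iff.mpr (we f)
      filter_upwards [coeS (f : Fin m → Lp ℝ 1 μ), h2] with x h1' h2'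
      rw [h1']
      exact Finset.sup'_congr hne rfl fun j _ => h2' j
    calc Lmap f ≤ _ := step1
      _ = _ := step2
      _ ≤ _ := step3
      _ = _ := step4
  -- Hahn–Banach extension
  obtain ⟨Λ, hΛeq, hΛle⟩ := exists_extension_of_le_sublinear ⟨M, Lmap⟩
    (fun f => ∫ x, (Finset.univ.sup' hne f) x ∂μ)
    (fun c hc f => phom c hc f) (fun f g => psub f g) hLle
  -- basic consequences
  have hples : ∀ (u : Lp ℝ 1 μ) (k : Fin m) (b : Q → ℝ), Integrable b μ →
      (⇑u ≤ᵐ[μ] b) → (∀ᵐ x ∂μ, 0 ≤ b x) → Λ (Pi.single k u) ≤ ∫ x, b x ∂μ := by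
    intro u k b hbint hub hb0
    refine (hΛle (Pi.single k u)).trans ?_
    refine integral_mono_ae (intS _) hbint ?_
    have hcomp : ∀ᵐ x ∂μ, ∀ j, ((Pi.single k u : Fin m → Lp ℝ 1 μ) j) x ≤ b x := by
      rw [ae_all_iff]
      intro j
      rcases eq_or_ne j k with rfl | hjk
      · filter_upwards [hub] with x hx
        simpa using hx
      · have hz : (Pi.single k u : Fin m → Lp ℝ 1 μ) j = 0 := by
          simp [Pi.single_eq_of_ne hjk]
        rw [hz]
        filter_upwards [Lp.coeFn_zero ℝ 1 μ, hb0] with x hx h0x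
        rw [hx]
        exact h0x
    filter_upwards [coeS (Pi.single k u), hcomp] with x h1 h2
    rw [h1]
    exact Finset.sup'_le _ _ fun j _ => h2 j
  have hsingle_neg : ∀ (k : Fin m) (u : Lp ℝ 1 μ),
      (Pi.single k (-u) : Fin m → Lp ℝ 1 μ) = -(Pi.single k u : Fin m → Lp ℝ 1 μ) := by
    intro k u
    funext j
    rcases eq_or_ne j k with rfl | hjk
    · simp
    · simp [Pi.single_eq_of_ne hjk]
  have hpos : ∀ (k : Fin m) (u : Lp ℝ 1 μ), 0 ≤ᵐ[μ] ⇑u → 0 ≤ Λ (Pi.single k u) := by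
    intro k u hu
    have h1 : Λ (Pi.single k (-u)) ≤ ∫ _x : Q, (0 : ℝ) ∂μ := by
      refine hples (-u) k (fun _ => 0) (integrable_const 0) ?_
        (Eventually.of_forall fun _ => le_rfl)
      filter_upwards [Lp.coeFn_neg u, hu] with x h1x h2x
      rw [h1x]
      simpa using h2x
    rw [integral_zero] at h1
    rw [hsingle_neg, map_neg] at h1
    linarith
  have hsumΛ : ∀ u : Lp ℝ 1 μ, ∑ k, Λ (Pi.single k u) = ∫ x, u x ∂μ := by
    intro u
    have hconstu : ∀ v : Lp ℝ 1 μ, Λ (fun _ : Fin m => v) ≤ ∫ x, v x ∂μ := by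
      intro v
      refine (hΛle _).trans (le_of_eq ?_)
      rw [Finset.sup'_const hne v]
    have h4 : ∑ k, Λ (Pi.single k u) = Λ (fun _ : Fin m => u) := by
      rw [← map_sum]
      congr 1
      exact Finset.univ_sum_single (fun _ : Fin m => u)
    have h5 := hconstu u
    have h6 := hconstu (-u)
    have h7 : Λ (fun _ : Fin m => -u) = -Λ (fun _ : Fin m => u) := by
      have : (fun _ : Fin m => -u) = -(fun _ : Fin m => u) := rfl
      rw [this, map_neg]
    have h8 : ∫ x, (-u : Lp ℝ 1 μ) x ∂μ = -∫ x, u x ∂μ := by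
      rw [integral_congr_ae (Lp.coeFn_neg u)]
      exact integral_neg _
    rw [h7, h8] at h6
    rw [h4]
    linarith
  -- identification on affine tuples
  have haff : ∀ (k : Fin m) (a : X → ℝ) (hac : Continuous a), CFM.AffId a →
      Λ (Pi.single k ((CFM.integrable_comp μ hac).toL1 _)) = ∫ x, a ↑x ∂(νs k) := by
    intro k a hac haa
    set u : Lp ℝ 1 μ := (CFM.integrable_comp μ hac).toL1 _ with hu
    have hmem : Pi.single k u ∈ M := by
      refine ⟨Pi.single k a, fun j => ?_, fun j => ?_, fun j => ?_⟩
      · rcases eq_or_ne j k with rfl | hjk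
        · rw [Pi.single_eq_same]; exact hac
        · rw [Pi.single_eq_of_ne hjk]; exact continuous_const
      · rcases eq_or_ne j k with rfl | hjk
        · rw [Pi.single_eq_same]; exact haa
        · rw [Pi.single_eq_of_ne hjk]; exact CFM.AffId.zero
      · rcases eq_or_ne j k with rfl | hjk
        · simp only [Pi.single_eq_same]
          exact Integrable.coeFn_toL1 _
        · rw [Pi.single_eq_of_ne hjk, Pi.single_eq_of_ne hjk]
          simpa [Pi.zero_def] using Lp.coeFn_zero ℝ 1 μ
    have h1 : Λ (Pi.single k u) = Lmap ⟨Pi.single k u, hmem⟩ := hΛeq ⟨_, hmem⟩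
    rw [h1]
    have h2 : ∀ j, ∫ x, w ⟨Pi.single k u, hmem⟩ j ↑x ∂(νs j) =
        ∫ x, (Pi.single k a : Fin m → X → ℝ) j ↑x ∂(νs j) := by
      intro j
      have hc2 : Continuous ((Pi.single k a : Fin m → X → ℝ) j) := by
        rcases eq_or_ne j k with rfl | hjk
        · rw [Pi.single_eq_same]; exact hac
        · rw [Pi.single_eq_of_ne hjk]; exact continuous_const
      have ha2 : CFM.AffId ((Pi.single k a : Fin m → X → ℝ) j) := by
        rcases eq_or_ne j k with rfl | hjk
        · rw [Pi.single_eq_same]; exact haa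
        · rw [Pi.single_eq_of_ne hjk]; exact CFM.AffId.zero
      refine key _ _ (wc _ j) hc2 (wa _ j) ha2 ?_ j
      have hmemw := we ⟨Pi.single k u, hmem⟩ j
      refine hmemw.symm.trans ?_
      rcases eq_or_ne j k with rfl | hjk
      · simp only [Pi.single_eq_same]
        exact Integrable.coeFn_toL1 _
      · rw [show ((⟨Pi.single k u, hmem⟩ : ↥M) : Fin m → Lp ℝ 1 μ) j = 0 by
          show (Pi.single k u : Fin m → Lp ℝ 1 μ) j = 0
          simp [Pi.single_eq_of_ne hjk], Pi.single_eq_of_ne hjk]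
        simpa [Pi.zero_def] using Lp.coeFn_zero ℝ 1 μ
    show (∑ j, ∫ x, w ⟨Pi.single k u, hmem⟩ j ↑x ∂(νs j)) = _
    rw [Finset.sum_congr rfl fun j _ => h2 j]
    rw [Finset.sum_eq_single_of_mem k (Finset.mem_univ k)]
    · rw [Pi.single_eq_same]
    · intro j _ hjk
      rw [show (Pi.single k a : Fin m → X → ℝ) j = (0 : X → ℝ) by simp [Pi.single_eq_of_ne hjk]]
      simp
  -- the inclusion L² → L¹
  have hone2 : (1 : ℝ≥0∞) ≤ 2 := one_le_two
  set incl : Lp ℝ 2 μ → Lp ℝ 1 μ :=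
    fun g => ((Lp.memLp g).mono_exponent hone2).toLp ⇑g with hincl_def
  have hincl : ∀ g : Lp ℝ 2 μ, ⇑(incl g) =ᵐ[μ] ⇑g := fun g => MemLp.coeFn_toLp _
  have hincl_add : ∀ g g' : Lp ℝ 2 μ, incl (g + g') = incl g + incl g' := by
    intro g g'
    apply Lp.ext
    filter_upwards [hincl (g + g'), Lp.coeFn_add g g', hincl g, hincl g',
      Lp.coeFn_add (incl g) (incl g')] with x h1 h2 h3 h4 h5
    rw [h1, h2, h5, Pi.add_apply, Pi.add_apply, h3, h4]
  have hincl_smul : ∀ (c : ℝ) (g : Lp ℝ 2 μ), incl (c • g) = c • incl g := by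
    intro c g
    apply Lp.ext
    filter_upwards [hincl (c • g), Lp.coeFn_smul c g, hincl g,
      Lp.coeFn_smul c (incl g)] with x h1 h2 h3 h4
    rw [h1, h2, h4, Pi.smul_apply, Pi.smul_apply, h3]
  -- integral bound through L² norms
  set one2 : Lp ℝ 2 μ := (memLp_const (1 : ℝ)).toLp _ with hone2_def
  have hone2coe : ⇑one2 =ᵐ[μ] fun _ => (1 : ℝ) := MemLp.coeFn_toLp _
  have habs_int : ∀ g : Lp ℝ 2 μ, ∫ x, |g x| ∂μ ≤ ‖one2‖ * ‖g‖ := by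
    intro g
    have h1 : ∫ x, |g x| ∂μ = (inner ℝ (|g|) (one2) : ℝ) := by
      rw [L2.inner_def]
      refine (integral_congr_ae ?_).symm
      filter_upwards [Lp.coeFn_abs g, hone2coe] with x hx h1x
      rw [hx, h1x]
      simp [RCLike.inner_apply']
    rw [h1]
    calc (inner ℝ (|g|) (one2) : ℝ) ≤ |(inner ℝ (|g|) (one2) : ℝ)| := le_abs_self _
      _ ≤ ‖|g|‖ * ‖one2‖ := abs_real_inner_le_norm _ _
      _ = ‖one2‖ * ‖g‖ := by rw [norm_abs_eq_norm]; ring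
  have hgb : ∀ (k : Fin m) (u : Lp ℝ 1 μ) (g : Lp ℝ 2 μ), (⇑u =ᵐ[μ] ⇑g) →
      |Λ (Pi.single k u)| ≤ ∫ x, |g x| ∂μ := by
    intro k u g hug
    have hgint : Integrable (⇑g) μ := (Lp.memLp g).integrable one_le_two
    rw [abs_le]
    constructor
    · have h1 : Λ (Pi.single k (-u)) ≤ ∫ x, |g x| ∂μ := by
        refine hples (-u) k _ hgint.abs ?_ (Eventually.of_forall fun x => abs_nonneg _)
        filter_upwards [Lp.coeFn_neg u, hug] with x h1x h2x
        rw [h1x, Pi.neg_apply, h2x]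
        exact neg_le_abs _
      rw [hsingle_neg, map_neg] at h1
      linarith
    · refine hples u k _ hgint.abs ?_ (Eventually.of_forall fun x => abs_nonneg _)
      filter_upwards [hug] with x hx
      rw [hx]
      exact le_abs_self _
  -- Riesz representation in L²
  have hriesz : ∀ k : Fin m, ∃ gk : Lp ℝ 2 μ,
      ∀ g : Lp ℝ 2 μ, (inner ℝ (gk) (g) : ℝ) = Λ (Pi.single k (incl g)) := by
    intro k
    let T : Lp ℝ 2 μ →ₗ[ℝ] ℝ :=
    { toFun := fun g => Λ (Pi.single k (incl g))
      map_add' := by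
        intro g g'
        show Λ (Pi.single k (incl (g + g'))) = Λ (Pi.single k (incl g)) + Λ (Pi.single k (incl g'))
        rw [hincl_add, Pi.single_add, map_add]
      map_smul' := by
        intro c g
        show Λ (Pi.single k (incl (c • g))) = c • Λ (Pi.single k (incl g))
        rw [hincl_smul, Pi.single_smul, _root_.map_smul] }
    have hTb : ∀ g : Lp ℝ 2 μ, ‖T g‖ ≤ ‖one2‖ * ‖g‖ := by
      intro g
      exact (hgb k (incl g) g (hincl g)).trans (habs_int g)
    let Tc : Lp ℝ 2 μ →L[ℝ] ℝ := T.mkContinuous ‖one2‖ hTb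
    refine ⟨(InnerProductSpace.toDual ℝ (Lp ℝ 2 μ)).symm Tc, fun g => ?_⟩
    rw [InnerProductSpace.toDual_symm_apply]
    rfl
  choose gk hgk using hriesz
  -- the densities are a.e. nonnegative
  have hgk0 : ∀ k, 0 ≤ᵐ[μ] ⇑(gk k) := by
    intro k
    set n : Lp ℝ 2 μ := gk k ⊓ 0 with hn
    have hncoe : ⇑n =ᵐ[μ] fun x => min (gk k x) 0 := by
      filter_upwards [Lp.coeFn_inf (gk k) (0 : Lp ℝ 2 μ), Lp.coeFn_zero ℝ 2 μ] with x h1 h2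
      rw [h1, Pi.inf_apply, h2]
      rfl
    have hpos1 : 0 ≤ Λ (Pi.single k (incl (-n))) := by
      refine hpos k (incl (-n)) ?_
      filter_upwards [hincl (-n), Lp.coeFn_neg n, hncoe] with x h1 h2 h3
      rw [h1, h2, Pi.neg_apply, h3]
      exact neg_nonneg.mpr (min_le_right _ _)
    have h2' : (inner ℝ (gk k) (-n) : ℝ) = -(inner ℝ (gk k) (n) : ℝ) := inner_neg_right _ _
    have h3' : (inner ℝ (gk k) (n) : ℝ) = (inner ℝ (n) (n) : ℝ) := by
      rw [L2.inner_def, L2.inner_def]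
      refine integral_congr_ae ?_
      filter_upwards [hncoe] with x hx
      simp only [RCLike.inner_apply', conj_trivial, hx]
      rcases le_or_gt (gk k x) 0 with hle | hlt
      · rw [min_eq_left hle]
      · rw [min_eq_right hlt.le]
        ring
    have h4' : (inner ℝ (n) (n) : ℝ) ≤ 0 := by
      have h5' := hgk k (-n)
      rw [h2'] at h5'
      have : (inner ℝ (gk k) (n) : ℝ) = -Λ (Pi.single k (incl (-n))) := by linarith
      rw [h3'] at this
      linarith
    have h5 : n = 0 := real_inner_self_nonpos.mp h4'
    rw [h5] at hncoe
    filter_upwards [hncoe, Lp.coeFn_zero ℝ 2 μ] with x h1 h2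
    have h3 : min (gk k x) 0 = 0 := by rw [← h1, h2]; simp
    simpa using min_eq_right_iff.mp h3
  -- the densities sum to 1
  have hsum2 : ∑ k, gk k = one2 := by
    have hinner : ∀ g : Lp ℝ 2 μ, (inner ℝ ((∑ k, gk k) - one2) (g) : ℝ) = 0 := by
      intro g
      rw [inner_sub_left, sum_inner]
      have h1 : ∑ k, (inner ℝ (gk k) (g) : ℝ) = ∫ x, g x ∂μ := by
        have : ∀ k : Fin m, (inner ℝ (gk k) (g) : ℝ) = Λ (Pi.single k (incl g)) := fun k => hgk k g
        rw [Finset.sum_congr rfl fun k _ => this k, hsumΛ (incl g)]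
        exact integral_congr_ae (hincl g)
      have h2 : (inner ℝ (one2) (g) : ℝ) = ∫ x, g x ∂μ := by
        rw [L2.inner_def]
        refine integral_congr_ae ?_
        filter_upwards [hone2coe] with x hx
        simp [RCLike.inner_apply', hx]
      rw [h1, h2]
      ring
    have h0 := hinner ((∑ k, gk k) - one2)
    have := inner_self_eq_zero.mp h0
    exact sub_eq_zero.mp this
  -- define the measures
  have hdmeas : ∀ k, Measurable fun x => Real.toNNReal (gk k x) :=
    fun k => (Lp.stronglyMeasurable (gk k)).measurable.real_toNNReal
  refine ⟨fun k => μ.withDensity (fun x => (Real.toNNReal (gk k x) : ℝ≥0∞)),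
    ?_, ?_, ?_⟩
  · intro k
    constructor
    rw [withDensity_apply _ MeasurableSet.univ, Measure.restrict_univ]
    calc ∫⁻ x, (Real.toNNReal (gk k x) : ℝ≥0∞) ∂μ
        ≤ ∫⁻ x, (‖gk k x‖₊ : ℝ≥0∞) ∂μ := by
          refine lintegral_mono fun x => ?_
          rw [show ((Real.toNNReal (gk k x) : ℝ≥0) : ℝ≥0∞) =
            ENNReal.ofReal (gk k x) from rfl]
          exact Real.ofReal_le_enorm _
      _ < ⊤ := ((Lp.memLp (gk k)).integrable one_le_two).2
  · ext A hA
    rw [Measure.finset_sum_apply]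
    have hstep : ∀ k : Fin m,
        μ.withDensity (fun x => (Real.toNNReal (gk k x) : ℝ≥0∞)) A =
          ∫⁻ x in A, (Real.toNNReal (gk k x) : ℝ≥0∞) ∂μ :=
      fun k => withDensity_apply _ hA
    rw [Finset.sum_congr rfl fun k _ => hstep k,
      ← lintegral_finset_sum _ fun k _ => ((hdmeas k).coe_nnreal_ennreal)]
    have hae1 : ∀ᵐ x ∂μ, ∑ k, ((Real.toNNReal (gk k x) : ℝ≥0) : ℝ≥0∞) = 1 := by
      have hcs := CFM.coeFn_sum'' Finset.univ gk
      rw [hsum2] at hcs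
      have hall : ∀ᵐ x ∂μ, ∀ k, 0 ≤ gk k x := ae_all_iff.mpr hgk0
      filter_upwards [hcs, hone2coe, hall] with x h1 h2 h3
      have hsumx : ∑ k, gk k x = 1 := by
        rw [← h2, h1]  -- careful orientation
      calc ∑ k, ((Real.toNNReal (gk k x) : ℝ≥0) : ℝ≥0∞)
          = ∑ k, ENNReal.ofReal (gk k x) := rfl
        _ = ENNReal.ofReal (∑ k, gk k x) :=
            (ENNReal.ofReal_sum_of_nonneg fun k _ => h3 k).symm
        _ = 1 := by rw [hsumx, ENNReal.ofReal_one]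
    symm
    calc ∫⁻ x in A, ∑ k, ((Real.toNNReal (gk k x) : ℝ≥0) : ℝ≥0∞) ∂μ
        = ∫⁻ _x in A, 1 ∂μ := lintegral_congr_ae (ae_restrict_of_ae hae1)
      _ = μ A := setLIntegral_one A
  · intro k a hac haa
    have hi := integral_withDensity_eq_integral_smul (μ := μ) (hdmeas k) (fun x : Q => a ↑x)
    rw [hi]
    have ha2 : MemLp (fun x : Q => a ↑x) 2 μ := CFM.memLp_comp μ hac 2
    have e2 : ∫ x, Real.toNNReal (gk k x) • a ↑x ∂μ = (inner ℝ (gk k) (ha2.toLp _) : ℝ) := by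
      rw [L2.inner_def]
      refine integral_congr_ae ?_
      filter_upwards [hgk0 k, ha2.coeFn_toLp] with x h0 h1
      simp only [RCLike.inner_apply', conj_trivial, h1]
      rw [NNReal.smul_def, Real.coe_toNNReal _ h0, smul_eq_mul]
    rw [e2, hgk k (ha2.toLp _)]
    have e3 : incl (ha2.toLp _) = (CFM.integrable_comp μ hac).toL1 _ := by
      apply Lp.ext
      filter_upwards [hincl (ha2.toLp _), ha2.coeFn_toLp,
        Integrable.coeFn_toL1 (CFM.integrable_comp μ hac)] with x h1 h2 h3
      rw [h1, h2, h3]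
    rw [e3]
    exact haff k a hac haa
end

section
/- (Decomposition theorem, sufficiency.) Let X be a Riesz space, let H_1,…,H_N be cones in X, and let f and g be positive linear functionals on X. Suppose that for every decomposition g = g_1 + … + g_N of g into a sum of N positive linear functionals there is a decomposition f = f_1 + … + f_N of f into a sum of N positive linear functionals such that f_k(h_k) ≥ g_k(h_k) for all h_k ∈ H_k and each k = 1,…,N. Then f(h_1 ∨ … ∨ h_N) ≥ g(h_1 ∨ … ∨ h_N) for all h_k ∈ H_k (k = 1,…,N). -/
section Helpers

variable {X : Type*} [Lattice X] [AddCommGroup X]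
    [CovariantClass X X (· + ·) (· ≤ ·)] [Module ℝ X] [PosSMulMono ℝ X]

private lemma pos_mono (g : X →ₗ[ℝ] ℝ) (hg : ∀ x : X, 0 ≤ x → 0 ≤ g x)
    {a b : X} (h : a ≤ b) : g a ≤ g b := by
  have h1 := hg (b - a) (sub_nonneg.2 h)
  have h2 : g (b - a) = g b - g a := g.map_sub b a
  linarith

private lemma smul_mono_scalar {s t : ℝ} (h : s ≤ t) {w : X} (hw : 0 ≤ w) :
    s • w ≤ t • w := by
  have h1 : 0 ≤ (t - s) • w := smul_nonneg (sub_nonneg.2 h) hw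
  have h2 : (t - s) • w = t • w - s • w := sub_smul t s w
  rw [h2] at h1
  exact sub_nonneg.1 h1

private lemma smul_inf_eq {c : ℝ} (hc : 0 < c) (a b : X) :
    c • (a ⊓ b) = c • a ⊓ c • b := by
  apply le_antisymm
  · exact le_inf (smul_le_smul_of_nonneg_left inf_le_left hc.le)
      (smul_le_smul_of_nonneg_left inf_le_right hc.le)
  · have h : c⁻¹ • (c • a ⊓ c • b) ≤ a ⊓ b := by
      apply le_inf
      · have := smul_le_smul_of_nonneg_left (inf_le_left (a := c • a) (b := c • b))
          (inv_nonneg.2 hc.le)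
        rwa [smul_smul, inv_mul_cancel₀ hc.ne', one_smul] at this
      · have := smul_le_smul_of_nonneg_left (inf_le_right (a := c • a) (b := c • b))
          (inv_nonneg.2 hc.le)
        rwa [smul_smul, inv_mul_cancel₀ hc.ne', one_smul] at this
    calc c • a ⊓ c • b = c • (c⁻¹ • (c • a ⊓ c • b)) := by
          rw [smul_smul, mul_inv_cancel₀ hc.ne', one_smul]
      _ ≤ c • (a ⊓ b) := smul_le_smul_of_nonneg_left h hc.le

private lemma smul_sup_eq {c : ℝ} (hc : 0 < c) (a b : X) :
    c • (a ⊔ b) = c • a ⊔ c • b := by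
  apply le_antisymm
  · have h : a ⊔ b ≤ c⁻¹ • (c • a ⊔ c • b) := by
      apply sup_le
      · have := smul_le_smul_of_nonneg_left (le_sup_left (a := c • a) (b := c • b))
          (inv_nonneg.2 hc.le)
        rwa [smul_smul, inv_mul_cancel₀ hc.ne', one_smul] at this
      · have := smul_le_smul_of_nonneg_left (le_sup_right (a := c • a) (b := c • b))
          (inv_nonneg.2 hc.le)
        rwa [smul_smul, inv_mul_cancel₀ hc.ne', one_smul] at this
    calc c • (a ⊔ b) ≤ c • (c⁻¹ • (c • a ⊔ c • b)) := smul_le_smul_of_nonneg_left h hc.le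
      _ = c • a ⊔ c • b := by rw [smul_smul, mul_inv_cancel₀ hc.ne', one_smul]
  · exact sup_le (smul_le_smul_of_nonneg_left le_sup_left hc.le)
      (smul_le_smul_of_nonneg_left le_sup_right hc.le)

/-- Key disjointness splitting lemma. -/
private lemma disjoint_split (g : X →ₗ[ℝ] ℝ) (hg : ∀ x : X, 0 ≤ x → 0 ≤ g x)
    (u v : X) (hu : 0 ≤ u) (hv : 0 ≤ v) (huv : u ⊓ v = 0) :
    ∃ g₁ g₂ : X →ₗ[ℝ] ℝ, (∀ x : X, 0 ≤ x → 0 ≤ g₁ x) ∧ (∀ x : X, 0 ≤ x → 0 ≤ g₂ x) ∧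
      g = g₁ + g₂ ∧ g₁ u = 0 ∧ g₂ v = 0 := by
  classical
  set ψ : X → ℝ := fun x => ⨆ t : ℝ, g (x ⊓ t • v) with hψ
  have hbdd : ∀ x : X, BddAbove (Set.range fun t : ℝ => g (x ⊓ t • v)) := by
    intro x
    refine ⟨g x, ?_⟩
    rintro r ⟨t, rfl⟩
    exact pos_mono g hg inf_le_left
  have hmono_t : ∀ (x : X) {s t : ℝ}, s ≤ t → g (x ⊓ s • v) ≤ g (x ⊓ t • v) := by
    intro x s t hst
    exact pos_mono g hg (inf_le_inf_left x (smul_mono_scalar hst hv))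
  have ψ_le : ∀ x : X, ψ x ≤ g x := fun x => ciSup_le fun t => pos_mono g hg inf_le_left
  have ψ_nonneg : ∀ x : X, 0 ≤ x → 0 ≤ ψ x := by
    intro x hx
    have h0 : g (x ⊓ (0 : ℝ) • v) = 0 := by
      rw [zero_smul, inf_eq_right.2 hx, map_zero]
    have := le_ciSup (hbdd x) (0 : ℝ)
    rw [h0] at this
    exact this
  have ψ_zero : ψ 0 = 0 := le_antisymm (by simpa using ψ_le 0) (ψ_nonneg 0 le_rfl)
  -- additivity on the positive cone
  have ψ_add : ∀ x y : X, 0 ≤ x → 0 ≤ y → ψ (x + y) = ψ x + ψ y := by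
    intro x y hx hy
    apply le_antisymm
    · apply ciSup_le
      intro t
      set t' := max t 0 with ht'
      have ht'0 : (0:ℝ) ≤ t' := le_max_right t 0
      have hw : (0:X) ≤ t' • v := smul_nonneg ht'0 hv
      have key : (x + y) ⊓ t' • v ≤ x ⊓ t' • v + y ⊓ t' • v := by
        set w := t' • v
        have heq : x ⊓ w + y ⊓ w = ((x + y) ⊓ (x + w)) ⊓ ((w + y) ⊓ (w + w)) := by
          rw [inf_add, add_inf, add_inf]
        rw [heq]
        refine le_inf (le_inf inf_le_left ?_) (le_inf ?_ ?_)
        · exact inf_le_right.trans (le_add_of_nonneg_left hx)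
        · exact inf_le_right.trans (le_add_of_nonneg_right hy)
        · exact inf_le_right.trans (le_add_of_nonneg_left hw)
      have h1 : g ((x + y) ⊓ t • v) ≤ g ((x + y) ⊓ t' • v) := hmono_t _ (le_max_left t 0)
      have h2 : g ((x + y) ⊓ t' • v) ≤ g (x ⊓ t' • v) + g (y ⊓ t' • v) := by
        have := pos_mono g hg key
        rwa [map_add] at this
      have h3 : g (x ⊓ t' • v) ≤ ψ x := le_ciSup (hbdd x) t'
      have h4 : g (y ⊓ t' • v) ≤ ψ y := le_ciSup (hbdd y) t'
      linarith
    · have key : ∀ t s : ℝ, g (x ⊓ t • v) + g (y ⊓ s • v) ≤ ψ (x + y) := by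
        intro t s
        set r := max t s with hr
        have h1 : g (x ⊓ t • v) ≤ g (x ⊓ r • v) := hmono_t _ (le_max_left t s)
        have h2 : g (y ⊓ s • v) ≤ g (y ⊓ r • v) := hmono_t _ (le_max_right t s)
        have h3 : x ⊓ r • v + y ⊓ r • v ≤ (x + y) ⊓ ((r + r) • v) := by
          refine le_inf (add_le_add inf_le_left inf_le_left) ?_
          rw [add_smul]
          exact add_le_add inf_le_right inf_le_right
        have h4 : g (x ⊓ r • v) + g (y ⊓ r • v) ≤ g ((x + y) ⊓ (r + r) • v) := by
          have := pos_mono g hg h3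
          rwa [map_add] at this
        have h5 : g ((x + y) ⊓ (r + r) • v) ≤ ψ (x + y) := le_ciSup (hbdd (x + y)) (r + r)
        linarith
      have h1 : ψ x ≤ ψ (x + y) - ψ y := by
        apply ciSup_le
        intro t
        have h2 : ψ y ≤ ψ (x + y) - g (x ⊓ t • v) := by
          apply ciSup_le
          intro s
          linarith [key t s]
        linarith
      linarith
  -- positive homogeneity on the cone
  have ψ_smul : ∀ (c : ℝ), 0 < c → ∀ x : X, ψ (c • x) = c * ψ x := by
    intro c hc x
    have hterm : ∀ t : ℝ, g (c • x ⊓ t • v) = c * g (x ⊓ (c⁻¹ * t) • v) := by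
      intro t
      have h1 : c • x ⊓ t • v = c • (x ⊓ (c⁻¹ * t) • v) := by
        rw [smul_inf_eq hc, smul_smul, mul_inv_cancel_left₀ hc.ne']
      rw [h1, map_smul, smul_eq_mul]
    have hsurj : Function.Surjective (fun t : ℝ => c⁻¹ * t) := by
      intro s
      exact ⟨c * s, by field_simp⟩
    calc ψ (c • x) = ⨆ t : ℝ, c * g (x ⊓ (c⁻¹ * t) • v) := by
          rw [hψ]; exact iSup_congr hterm
      _ = c * ⨆ t : ℝ, g (x ⊓ (c⁻¹ * t) • v) := (Real.mul_iSup_of_nonneg hc.le _).symm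
      _ = c * ψ x := by
          rw [hψ]
          congr 1
          exact hsurj.iSup_comp (fun s => g (x ⊓ s • v))
  have ψ_u : ψ u = 0 := by
    apply le_antisymm _ (ψ_nonneg u hu)
    apply ciSup_le
    intro t
    set s := max t 1 with hs
    have hs1 : (1:ℝ) ≤ s := le_max_right t 1
    have hs0 : (0:ℝ) < s := lt_of_lt_of_le one_pos hs1
    have h1 : u ⊓ t • v ≤ s • u ⊓ s • v := by
      refine le_inf (inf_le_left.trans ?_) (inf_le_right.trans ?_)
      · have := smul_mono_scalar hs1 hu; rwa [one_smul] at this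
      · exact smul_mono_scalar (le_max_left t 1) hv
    have h2 : s • u ⊓ s • v = 0 := by rw [← smul_inf_eq hs0, huv, smul_zero]
    have := pos_mono g hg (h1.trans_eq h2)
    rwa [map_zero] at this
  have ψ_v : ψ v = g v := by
    apply le_antisymm (ψ_le v)
    have h1 : g (v ⊓ (1:ℝ) • v) = g v := by rw [one_smul, inf_idem]
    have := le_ciSup (hbdd v) (1:ℝ)
    rwa [h1] at this
  -- extend ψ to a linear functional
  set Φ : X → ℝ := fun x => ψ (x⁺) - ψ (x⁻) with hΦ
  have Φ_pos : ∀ x : X, 0 ≤ x → Φ x = ψ x := by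
    intro x hx
    rw [hΦ]
    simp only
    rw [posPart_eq_self.2 hx, negPart_eq_zero.2 hx, ψ_zero, sub_zero]
  have Φ_add : ∀ x y : X, Φ (x + y) = Φ x + Φ y := by
    intro x y
    have e : (x + y)⁺ + (x⁻ + y⁻) = (x + y)⁻ + (x⁺ + y⁺) := by
      have h1 : (x + y)⁺ = (x + y) + (x + y)⁻ := eq_add_of_sub_eq (posPart_sub_negPart _)
      have h2 : x⁺ = x + x⁻ := eq_add_of_sub_eq (posPart_sub_negPart _)
      have h3 : y⁺ = y + y⁻ := eq_add_of_sub_eq (posPart_sub_negPart _)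
      rw [h1, h2, h3]; abel
    have hL : ψ ((x + y)⁺ + (x⁻ + y⁻)) = ψ ((x + y)⁺) + (ψ (x⁻) + ψ (y⁻)) := by
      rw [ψ_add _ _ (posPart_nonneg _) (add_nonneg (negPart_nonneg _) (negPart_nonneg _)),
        ψ_add _ _ (negPart_nonneg _) (negPart_nonneg _)]
    have hR : ψ ((x + y)⁻ + (x⁺ + y⁺)) = ψ ((x + y)⁻) + (ψ (x⁺) + ψ (y⁺)) := by
      rw [ψ_add _ _ (negPart_nonneg _) (add_nonneg (posPart_nonneg _) (posPart_nonneg _)),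
        ψ_add _ _ (posPart_nonneg _) (posPart_nonneg _)]
    have : ψ ((x + y)⁺) + (ψ (x⁻) + ψ (y⁻)) = ψ ((x + y)⁻) + (ψ (x⁺) + ψ (y⁺)) := by
      rw [← hL, ← hR, e]
    rw [hΦ]; simp only; linarith
  have Φ_neg : ∀ x : X, Φ (-x) = -Φ x := by
    intro x
    rw [hΦ]; simp only [posPart_neg, negPart_neg]; ring
  have Φ_smul : ∀ (c : ℝ) (x : X), Φ (c • x) = c * Φ x := by
    have pos_case : ∀ (c : ℝ), 0 < c → ∀ x : X, Φ (c • x) = c * Φ x := by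
      intro c hc x
      have hp : (c • x)⁺ = c • x⁺ := by
        rw [posPart_def, posPart_def, smul_sup_eq hc, smul_zero]
      have hn : (c • x)⁻ = c • x⁻ := by
        rw [negPart_def, negPart_def, ← smul_neg, smul_sup_eq hc, smul_zero]
      rw [hΦ]; simp only
      rw [hp, hn, ψ_smul c hc _, ψ_smul c hc _]; ring
    intro c x
    rcases lt_trichotomy c 0 with hc | hc | hc
    · have h1 : c • x = (-c) • (-x) := by rw [neg_smul, smul_neg, neg_neg]
      rw [h1, pos_case (-c) (by linarith) (-x), Φ_neg]; ring
    · subst hc; rw [zero_smul, zero_mul]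
      rw [hΦ]; simp only
      rw [show ((0:X))⁺ = 0 from posPart_eq_self.2 le_rfl,
        show ((0:X))⁻ = 0 from negPart_eq_zero.2 le_rfl, ψ_zero, sub_zero]
    · exact pos_case c hc x
  set g₁ : X →ₗ[ℝ] ℝ :=
    { toFun := Φ
      map_add' := Φ_add
      map_smul' := fun c x => by
        show Φ (c • x) = (RingHom.id ℝ) c • Φ x
        rw [Φ_smul, RingHom.id_apply, smul_eq_mul] } with hg₁
  refine ⟨g₁, g - g₁, ?_, ?_, ?_, ?_, ?_⟩
  · intro x hx
    have : g₁ x = ψ x := Φ_pos x hx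
    rw [this]; exact ψ_nonneg x hx
  · intro x hx
    have h1 : g₁ x = ψ x := Φ_pos x hx
    have h2 : (g - g₁) x = g x - g₁ x := rfl
    rw [h2, h1]
    linarith [ψ_le x]
  · abel
  · have : g₁ u = ψ u := Φ_pos u hu
    rw [this, ψ_u]
  · have h1 : g₁ v = ψ v := Φ_pos v hv
    have h2 : (g - g₁) v = g v - g₁ v := rfl
    rw [h2, h1, ψ_v, sub_self]

end Helpers

section Decomp

variable {X : Type*} [Lattice X] [AddCommGroup X]
    [CovariantClass X X (· + ·) (· ≤ ·)] [Module ℝ X] [PosSMulMono ℝ X]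

private lemma decomp_aux : ∀ (n : ℕ) (d : Fin (n + 1) → X), (∀ k, 0 ≤ d k) →
    ∀ g : X →ₗ[ℝ] ℝ, (∀ x : X, 0 ≤ x → 0 ≤ g x) →
    ∃ gs : Fin (n + 1) → X →ₗ[ℝ] ℝ, (∀ k, ∀ x : X, 0 ≤ x → 0 ≤ gs k x) ∧ (g = ∑ k, gs k) ∧
      ∑ k, gs k (d k) ≤ g (Finset.univ.inf' Finset.univ_nonempty d) := by
  intro n
  induction n with
  | zero =>
    intro d hd g hg
    refine ⟨fun _ => g, fun _ => hg, by simp, ?_⟩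
    have h1 : (Finset.univ.inf' Finset.univ_nonempty d) = d 0 := by
      apply le_antisymm (Finset.inf'_le _ (Finset.mem_univ 0))
      exact Finset.le_inf' _ _ fun b _ => by rw [Fin.fin_one_eq_zero b]
    rw [h1, Fin.sum_univ_one]
  | succ n ih =>
    intro d hd g hg
    set d' : Fin (n + 1) → X := fun k => d k.castSucc with hd'
    set e : X := Finset.univ.inf' Finset.univ_nonempty d' with he
    set dN : X := d (Fin.last (n + 1)) with hdN
    set m : X := e ⊓ dN with hm
    have hu : (0:X) ≤ e - m := sub_nonneg.2 inf_le_left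
    have hv : (0:X) ≤ dN - m := sub_nonneg.2 inf_le_right
    have huv : (e - m) ⊓ (dN - m) = 0 := by
      rw [sub_eq_add_neg, sub_eq_add_neg, ← inf_add, ← hm, add_neg_cancel]
    obtain ⟨g₁, g₂, hg₁, hg₂, hsplit, hg₁u, hg₂v⟩ :=
      disjoint_split g hg (e - m) (dN - m) hu hv huv
    obtain ⟨gs', hgs'pos, hgs'sum, hgs'le⟩ := ih d' (fun k => hd _) g₁ hg₁
    set gs : Fin (n + 2) → X →ₗ[ℝ] ℝ := Fin.snoc gs' g₂ with hgs
    have hgs_cast : ∀ k : Fin (n + 1), gs k.castSucc = gs' k := fun k => Fin.snoc_castSucc _ _ _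
    have hgs_last : gs (Fin.last (n + 1)) = g₂ := Fin.snoc_last _ _
    refine ⟨gs, ?_, ?_, ?_⟩
    · intro k
      refine Fin.lastCases ?_ ?_ k
      · rw [hgs_last]; exact hg₂
      · intro j; rw [hgs_cast]; exact hgs'pos j
    · rw [Fin.sum_univ_castSucc]
      simp only [hgs_cast, hgs_last]
      rw [← hgs'sum, ← hsplit]
    · have hinf : Finset.univ.inf' Finset.univ_nonempty d = m := by
        apply le_antisymm
        · exact le_inf
            (Finset.le_inf' _ _ fun b _ => Finset.inf'_le _ (Finset.mem_univ b.castSucc))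
            (Finset.inf'_le _ (Finset.mem_univ _))
        · refine Finset.le_inf' _ _ fun b _ => ?_
          refine Fin.lastCases ?_ ?_ b
          · exact inf_le_right
          · intro j
            exact inf_le_left.trans (Finset.inf'_le _ (Finset.mem_univ j))
      rw [hinf]
      have h1 : g₁ e = g₁ m := by
        have : g₁ e = g₁ (e - m) + g₁ m := by rw [← map_add, sub_add_cancel]
        rw [this, hg₁u, zero_add]
      have h2 : g₂ dN = g₂ m := by
        have : g₂ dN = g₂ (dN - m) + g₂ m := by rw [← map_add, sub_add_cancel]
        rw [this, hg₂v, zero_add]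
      have h3 : g m = g₁ m + g₂ m := by rw [hsplit]; rfl
      calc ∑ k, gs k (d k)
          = ∑ k : Fin (n + 1), gs' k (d' k) + g₂ dN := by
            rw [Fin.sum_univ_castSucc]
            simp only [hgs_cast, hgs_last, hd', hdN]
        _ ≤ g₁ e + g₂ dN := by linarith [hgs'le]
        _ = g m := by rw [h1, h2, h3]

end Decomp



/-- Decomposition theorem, sufficiency.  Let `X` be a Riesz space, `H 1, …, H N` cones in
`X`, and `f`, `g` positive linear functionals on `X`.  If for every decomposition
`g = g 1 + … + g N` into positive linear functionals there is a decomposition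
`f = f 1 + … + f N` into positive linear functionals with `f k (h) ≥ g k (h)` for all
`h ∈ H k`, then `f (h 1 ⊔ … ⊔ h N) ≥ g (h 1 ⊔ … ⊔ h N)` for all `h k ∈ H k`. -/
theorem decomposition_sufficiency
    {X : Type*} [Lattice X] [AddCommGroup X]
    [CovariantClass X X (· + ·) (· ≤ ·)] [Module ℝ X] [PosSMulMono ℝ X]
    {N : ℕ} (hN : 0 < N) (H : Fin N → Set X)
    (hHadd : ∀ k, ∀ a ∈ H k, ∀ b ∈ H k, a + b ∈ H k)
    (hHsmul : ∀ k, ∀ c : ℝ, 0 ≤ c → ∀ a ∈ H k, c • a ∈ H k)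
    (f g : X →ₗ[ℝ] ℝ)
    (hf : ∀ x : X, 0 ≤ x → 0 ≤ f x) (hg : ∀ x : X, 0 ≤ x → 0 ≤ g x)
    (hyp : ∀ gs : Fin N → (X →ₗ[ℝ] ℝ),
      (∀ k, ∀ x : X, 0 ≤ x → 0 ≤ gs k x) → g = ∑ k, gs k →
      ∃ fs : Fin N → (X →ₗ[ℝ] ℝ),
        (∀ k, ∀ x : X, 0 ≤ x → 0 ≤ fs k x) ∧ f = ∑ k, fs k ∧
        ∀ k, ∀ h ∈ H k, gs k h ≤ fs k h) :
    ∀ h : Fin N → X, (∀ k, h k ∈ H k) →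
      g (Finset.univ.sup' (Finset.univ_nonempty_iff.mpr ⟨⟨0, hN⟩⟩) h)
        ≤ f (Finset.univ.sup' (Finset.univ_nonempty_iff.mpr ⟨⟨0, hN⟩⟩) h) := by
  obtain ⟨n, rfl⟩ : ∃ n, N = n + 1 := ⟨N - 1, (Nat.succ_pred_eq_of_pos hN).symm⟩
  intro h hh
  set ne : (Finset.univ : Finset (Fin (n + 1))).Nonempty :=
    Finset.univ_nonempty_iff.mpr ⟨⟨0, hN⟩⟩ with hne
  set s : X := Finset.univ.sup' ne h with hs
  set d : Fin (n + 1) → X := fun k => s - h k with hd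
  have hd0 : ∀ k, 0 ≤ d k := fun k => sub_nonneg.2 (Finset.le_sup' h (Finset.mem_univ k))
  obtain ⟨gs, hgs_pos, hgs_sum, hgs_le⟩ := decomp_aux n d hd0 g hg
  have hinf0 : Finset.univ.inf' Finset.univ_nonempty d = 0 := by
    apply le_antisymm
    · have hub : ∀ k, h k ≤ s - Finset.univ.inf' Finset.univ_nonempty d := by
        intro k
        have := Finset.inf'_le (b := k) d (Finset.mem_univ k)
        rw [hd] at this
        exact le_sub_comm.1 this
      have hsup : s ≤ s - Finset.univ.inf' Finset.univ_nonempty d := by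
        rw [hs]
        exact Finset.sup'_le _ _ fun b _ => hub b
      exact (le_sub_self_iff s).1 hsup
    · exact Finset.le_inf' _ _ fun b _ => hd0 b
  have key : g s ≤ ∑ k, gs k (h k) := by
    have h1 : ∑ k, gs k (d k) ≤ 0 := by
      have := hgs_le
      rwa [hinf0, map_zero] at this
    have h2 : ∀ k, gs k (d k) = gs k s - gs k (h k) := fun k => map_sub _ _ _
    have h3 : ∑ k, gs k s = g s := by
      rw [hgs_sum]
      simp [LinearMap.sum_apply]
    have h4 : ∑ k, gs k (d k) = ∑ k, gs k s - ∑ k, gs k (h k) := by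
      rw [← Finset.sum_sub_distrib]
      exact Finset.sum_congr rfl fun k _ => h2 k
    rw [h4, h3] at h1
    linarith
  obtain ⟨fs, hfs_pos, hfs_sum, hfs_ge⟩ := hyp gs hgs_pos hgs_sum
  have hfs1 : ∑ k, fs k (h k) ≤ f s := by
    have h1 : ∀ k, fs k (h k) ≤ fs k s := by
      intro k
      exact pos_mono (fs k) (hfs_pos k) (Finset.le_sup' h (Finset.mem_univ k))
    have h2 : ∑ k, fs k s = f s := by
      rw [hfs_sum]
      simp [LinearMap.sum_apply]
    calc ∑ k, fs k (h k) ≤ ∑ k, fs k s := Finset.sum_le_sum fun k _ => h1 k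
      _ = f s := h2
  have h5 : ∑ k, gs k (h k) ≤ ∑ k, fs k (h k) :=
    Finset.sum_le_sum fun k _ => hfs_ge k (h k) (hh k)
  linarith
end

section
/- (Minkowski duality.) For every sublinear function p : ℝ^N → ℝ there exists a unique nonempty compact convex set K ⊆ ℝ^N such that p(x) = sup_{y ∈ K} ⟨x, y⟩ for all x ∈ ℝ^N; that is, p is the support function of a unique nonempty compact convex body, and conversely the support function of any nonempty compact convex set is sublinear. -/
open RealInnerProductSpace Pointwise

variable {N : ℕ}

local notation "E" => EuclideanSpace ℝ (Fin N)

lemma sub_p_zero {p : E → ℝ} (hp : (∀ t : ℝ, 0 ≤ t → ∀ x, p (t • x) = t * p x) ∧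
    (∀ x y, p (x + y) ≤ p x + p y)) : p 0 = 0 := by
  have := hp.1 0 le_rfl 0
  simpa using this

lemma exists_dominated_touching {p : E → ℝ}
    (hp : (∀ t : ℝ, 0 ≤ t → ∀ x, p (t • x) = t * p x) ∧ (∀ x y, p (x + y) ≤ p x + p y))
    (x₀ : E) : ∃ y : E, (∀ x, ⟪x, y⟫ ≤ p x) ∧ ⟪x₀, y⟫ = p x₀ := by
  have hp0 : p 0 = 0 := sub_p_zero hp
  have key : ∀ v : E, v ≠ 0 → ∃ y : E, (∀ x, ⟪x, y⟫ ≤ p x) ∧ ⟪v, y⟫ = p v := by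
    intro v hv
    set f : E →ₗ.[ℝ] ℝ := LinearPMap.mkSpanSingleton v (p v) hv with hf
    have hfle : ∀ z : f.domain, f z ≤ p z := by
      rintro ⟨z, hz⟩
      rcases Submodule.mem_span_singleton.1 hz with ⟨c, rfl⟩
      rw [LinearPMap.mkSpanSingleton'_apply]
      rcases le_or_gt 0 c with hc | hc
      · rw [hp.1 c hc v]; rfl
      · have h1 : p (c • v) = (-c) * p (-v) := by
          have : c • v = (-c) • (-v) := by simp
          rw [this, hp.1 (-c) (by linarith) (-v)]
        have h2 : 0 ≤ p v + p (-v) := by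
          have := hp.2 v (-v)
          simpa [hp0] using this
        have : c • p v ≤ (-c) * p (-v) := by
          have : c * p v ≤ c * (-(p (-v))) := by nlinarith
          simpa [smul_eq_mul, mul_comm] using this.trans_eq (by ring)
        change c • p v ≤ p (c • v)
        linarith [this, h1.ge]
    obtain ⟨g, hg1, hg2⟩ := exists_extension_of_le_sublinear f p
      (fun c hc x => hp.1 c hc.le x) hp.2 hfle
    set y : E := (InnerProductSpace.toDual ℝ (EuclideanSpace ℝ (Fin N))).symm
      (LinearMap.toContinuousLinearMap g) with hy
    have hyx : ∀ x, ⟪x, y⟫ = g x := by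
      intro x
      rw [real_inner_comm, hy, InnerProductSpace.toDual_symm_apply]
      rfl
    refine ⟨y, fun x => (hyx x).le.trans (hg2 x), ?_⟩
    rw [hyx v]
    have := hg1 ⟨v, Submodule.mem_span_singleton_self v⟩
    rw [this]
    exact LinearPMap.mkSpanSingleton_apply ℝ ℝ hv (p v)
  by_cases hx₀ : x₀ = 0
  · subst hx₀
    by_cases hex : ∃ v : E, v ≠ 0
    · obtain ⟨v, hv⟩ := hex
      obtain ⟨y, hy1, _⟩ := key v hv
      exact ⟨y, hy1, by simp [hp0]⟩
    · push_neg at hex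
      refine ⟨0, fun x => ?_, by simp [hp0]⟩
      rw [hex x]
      simp [hp0]
  · exact key x₀ hx₀

lemma sub_lin_bound {p : E → ℝ}
    (hp : (∀ t : ℝ, 0 ≤ t → ∀ x, p (t • x) = t * p x) ∧ (∀ x y, p (x + y) ≤ p x + p y)) :
    ∃ C : ℝ, 0 ≤ C ∧ ∀ x, p x ≤ C * ‖x‖ := by
  have hp0 : p 0 = 0 := sub_p_zero hp
  have hconv : ConvexOn ℝ Set.univ p := by
    refine ⟨convex_univ, fun x _ y _ a b ha hb _ => ?_⟩
    calc p (a • x + b • y) ≤ p (a • x) + p (b • y) := hp.2 _ _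
      _ = a * p x + b * p y := by rw [hp.1 a ha, hp.1 b hb]
      _ = a • p x + b • p y := rfl
  have hcont : Continuous p := by
    rw [← continuousOn_univ]
    exact hconv.continuousOn isOpen_univ
  by_cases hs : (Metric.sphere (0 : E) 1).Nonempty
  · obtain ⟨z, hz, hmax⟩ := (isCompact_sphere (0 : E) 1).exists_isMaxOn hs hcont.continuousOn
    refine ⟨max (p z) 0, le_max_right _ _, fun x => ?_⟩
    by_cases hx : x = 0
    · simp [hx, hp0]
    · have hnx : (0:ℝ) < ‖x‖ := norm_pos_iff.2 hx
      have hmem : ‖x‖⁻¹ • x ∈ Metric.sphere (0 : E) 1 := by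
        simp [norm_smul, abs_of_pos (inv_pos.2 hnx), inv_mul_cancel₀ hnx.ne']
      have h1 : p x = ‖x‖ * p (‖x‖⁻¹ • x) := by
        have := hp.1 ‖x‖ hnx.le (‖x‖⁻¹ • x)
        rw [smul_smul, mul_inv_cancel₀ hnx.ne', one_smul] at this
        exact this
      calc p x = ‖x‖ * p (‖x‖⁻¹ • x) := h1
        _ ≤ ‖x‖ * max (p z) 0 := by
            have := (hmax hmem).trans (le_max_left (p z) 0)
            exact mul_le_mul_of_nonneg_left this hnx.le
        _ = max (p z) 0 * ‖x‖ := mul_comm _ _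
  · refine ⟨0, le_rfl, fun x => ?_⟩
    by_cases hx : x = 0
    · simp [hx, hp0]
    · exact absurd ⟨‖x‖⁻¹ • x, by
        simp [norm_smul, abs_of_pos (inv_pos.2 (norm_pos_iff.2 hx)),
          inv_mul_cancel₀ (norm_pos_iff.2 hx).ne']⟩ hs

lemma mem_of_inner_le_csSup {K₂ : Set E} (hne : K₂.Nonempty) (hc : IsCompact K₂)
    (hconv : Convex ℝ K₂) {y : E}
    (hy : ∀ x : E, ⟪x, y⟫ ≤ sSup ((fun z => ⟪x, z⟫) '' K₂)) : y ∈ K₂ := by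
  by_contra hym
  obtain ⟨f, u, hfa, hfy⟩ := geometric_hahn_banach_closed_point hconv hc.isClosed hym
  set x : E := (InnerProductSpace.toDual ℝ (EuclideanSpace ℝ (Fin N))).symm f with hx
  have hxa : ∀ a : E, ⟪x, a⟫ = f a := fun a => InnerProductSpace.toDual_symm_apply
  have h1 : sSup ((fun z => ⟪x, z⟫) '' K₂) ≤ u := by
    refine csSup_le (hne.image _) ?_
    rintro v ⟨z, hz, rfl⟩
    show ⟪x, z⟫ ≤ u
    rw [hxa z]
    exact (hfa z hz).le
  have := (hy x).trans h1
  rw [hxa y] at this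
  linarith

/-- Minkowski duality: every sublinear `p : ℝ^N → ℝ` is the support function of a unique
nonempty compact convex set `K ⊆ ℝ^N`, and conversely the support function of any nonempty
compact convex set is sublinear. -/
theorem minkowski_duality {N : ℕ} :
    (∀ p : EuclideanSpace ℝ (Fin N) → ℝ, Sublinear N p →
      ∃! K : Set (EuclideanSpace ℝ (Fin N)),
        K.Nonempty ∧ IsCompact K ∧ Convex ℝ K ∧
        ∀ x, p x = sSup ((fun y => ⟪x, y⟫) '' K)) ∧
    (∀ K : Set (EuclideanSpace ℝ (Fin N)),
      K.Nonempty → IsCompact K → Convex ℝ K →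
      Sublinear N fun x => sSup ((fun y => ⟪x, y⟫) '' K)) := by
  have hinner_cont : ∀ x : EuclideanSpace ℝ (Fin N), Continuous fun y : EuclideanSpace ℝ (Fin N) => ⟪x, y⟫ := fun x =>
    Continuous.inner continuous_const continuous_id
  constructor
  · intro p hp
    set K : Set (EuclideanSpace ℝ (Fin N)) := {y | ∀ x, ⟪x, y⟫ ≤ p x} with hKdef
    have hKclosed : IsClosed K := by
      have : K = ⋂ x : EuclideanSpace ℝ (Fin N), {y : EuclideanSpace ℝ (Fin N) | ⟪x, y⟫ ≤ p x} := by
        ext y; simp [hKdef, Set.mem_iInter]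
      rw [this]
      exact isClosed_iInter fun x => isClosed_le (hinner_cont x) continuous_const
    have hKconv : Convex ℝ K := by
      intro y₁ h₁ y₂ h₂ a b ha hb hab
      intro x
      have : ⟪x, a • y₁ + b • y₂⟫ = a * ⟪x, y₁⟫ + b * ⟪x, y₂⟫ := by
        rw [inner_add_right, real_inner_smul_right, real_inner_smul_right]
      rw [this]
      calc a * ⟪x, y₁⟫ + b * ⟪x, y₂⟫ ≤ a * p x + b * p x := by
            gcongr <;> [exact h₁ x; exact h₂ x]
        _ = p x := by rw [← add_mul, hab, one_mul]
    obtain ⟨C, hC0, hC⟩ := sub_lin_bound hp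
    have hKbdd : Bornology.IsBounded K := by
      rw [isBounded_iff_forall_norm_le]
      refine ⟨C, fun y hy => ?_⟩
      have h2 : ‖y‖ * ‖y‖ ≤ C * ‖y‖ := by
        rw [← real_inner_self_eq_norm_mul_norm]
        exact (hy y).trans (hC y)
      rcases eq_or_lt_of_le (norm_nonneg y) with h0 | h0
      · rw [← h0]; exact hC0
      · exact le_of_mul_le_mul_right h2 h0
    have hKcpt : IsCompact K := Metric.isCompact_of_isClosed_isBounded hKclosed hKbdd
    have hbdd : ∀ x : EuclideanSpace ℝ (Fin N), BddAbove ((fun y => ⟪x, y⟫) '' K) := fun x =>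
      (hKcpt.image (hinner_cont x)).bddAbove
    have hKne : K.Nonempty := by
      obtain ⟨y, hy1, _⟩ := exists_dominated_touching hp 0
      exact ⟨y, hy1⟩
    have hsupp : ∀ x, p x = sSup ((fun y => ⟪x, y⟫) '' K) := by
      intro x
      obtain ⟨y, hy1, hy2⟩ := exists_dominated_touching hp x
      refine le_antisymm ?_ (csSup_le (hKne.image _) ?_)
      · rw [← hy2]
        exact le_csSup (hbdd x) ⟨y, hy1, rfl⟩
      · rintro v ⟨z, hz, rfl⟩
        exact hz x
    refine ⟨K, ⟨hKne, hKcpt, hKconv, hsupp⟩, ?_⟩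
    rintro K' ⟨hne', hcpt', hconv', hsupp'⟩
    have hbdd' : ∀ x : EuclideanSpace ℝ (Fin N), BddAbove ((fun y => ⟪x, y⟫) '' K') := fun x =>
      (hcpt'.image (hinner_cont x)).bddAbove
    ext z
    constructor
    · intro hz x
      rw [hsupp' x]
      exact le_csSup (hbdd' x) ⟨z, hz, rfl⟩
    · intro hz
      refine mem_of_inner_le_csSup hne' hcpt' hconv' fun x => ?_
      rw [← hsupp' x]
      exact hz x
  · intro K hne hcpt hconv
    have hbdd : ∀ x : EuclideanSpace ℝ (Fin N), BddAbove ((fun y => ⟪x, y⟫) '' K) := fun x =>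
      (hcpt.image (hinner_cont x)).bddAbove
    constructor
    · intro t ht x
      show sSup ((fun y => ⟪t • x, y⟫) '' K) = t * sSup ((fun y => ⟪x, y⟫) '' K)
      have himg : (fun y => ⟪t • x, y⟫) '' K = t • ((fun y => ⟪x, y⟫) '' K) := by
        rw [← Set.image_smul, Set.image_image]
        exact Set.image_congr fun y _ => by rw [smul_eq_mul, real_inner_smul_left]
      rw [himg, Real.sSup_smul_of_nonneg ht, smul_eq_mul]
    · intro x y
      show sSup ((fun w => ⟪x + y, w⟫) '' K) ≤
        sSup ((fun w => ⟪x, w⟫) '' K) + sSup ((fun w => ⟪y, w⟫) '' K)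
      refine csSup_le (hne.image _) ?_
      rintro v ⟨z, hz, rfl⟩
      show ⟪x + y, z⟫ ≤ sSup ((fun w => ⟪x, w⟫) '' K) + sSup ((fun w => ⟪y, w⟫) '' K)
      rw [inner_add_left]
      exact add_le_add (le_csSup (hbdd x) ⟨z, hz, rfl⟩) (le_csSup (hbdd y) ⟨z, hz, rfl⟩)
end

section
/- The linear span of the restrictions to the unit sphere S_{N-1} of support functions of nonempty compact convex subsets of ℝ^N is dense in the Banach space C(S_{N-1}) of continuous real-valued functions on S_{N-1} with the supremum norm; equivalently, every continuous function on S_{N-1} is a uniform limit of differences of restrictions of support functions of convex bodies. -/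
open RealInnerProductSpace Set Metric Pointwise

namespace SupportFnAux

variable {N : ℕ}

noncomputable def supF (K : Set (EuclideanSpace ℝ (Fin N))) (x : EuclideanSpace ℝ (Fin N)) : ℝ :=
  sSup ((fun y => ⟪x, y⟫) '' K)

lemma isGreatest_supF {K : Set (EuclideanSpace ℝ (Fin N))} (hK : IsCompact K)
    (hne : K.Nonempty) (x : EuclideanSpace ℝ (Fin N)) :
    IsGreatest ((fun y => ⟪x, y⟫) '' K) (supF K x) := by
  have hcont : Continuous fun y : EuclideanSpace ℝ (Fin N) => ⟪x, y⟫ :=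
    continuous_const.inner continuous_id
  have himg : IsCompact ((fun y => ⟪x, y⟫) '' K) := hK.image hcont
  exact ⟨himg.sSup_mem (hne.image _), fun z hz => le_csSup himg.bddAbove hz⟩

lemma supF_le {K : Set (EuclideanSpace ℝ (Fin N))} {x : EuclideanSpace ℝ (Fin N)} {m : ℝ}
    (hne : K.Nonempty) (h : ∀ y ∈ K, ⟪x, y⟫ ≤ m) : supF K x ≤ m :=
  csSup_le (hne.image _) (by rintro _ ⟨y, hy, rfl⟩; exact h y hy)

lemma le_supF {K : Set (EuclideanSpace ℝ (Fin N))} (hK : IsCompact K)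
    {x y : EuclideanSpace ℝ (Fin N)} (hy : y ∈ K) : ⟪x, y⟫ ≤ supF K x :=
  (isGreatest_supF hK ⟨y, hy⟩ x).2 ⟨y, hy, rfl⟩

lemma supF_add {K L : Set (EuclideanSpace ℝ (Fin N))} (hK : IsCompact K) (hKne : K.Nonempty)
    (hL : IsCompact L) (hLne : L.Nonempty) (x : EuclideanSpace ℝ (Fin N)) :
    supF (K + L) x = supF K x + supF L x := by
  obtain ⟨⟨yK, hyK, hK2⟩, hKub⟩ := isGreatest_supF hK hKne x
  obtain ⟨⟨yL, hyL, hL2⟩, hLub⟩ := isGreatest_supF hL hLne x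
  refine IsGreatest.csSup_eq ⟨⟨yK + yL, add_mem_add hyK hyL, by
      simp [inner_add_right, hK2, hL2]⟩, ?_⟩
  rintro _ ⟨z, hz, rfl⟩
  obtain ⟨k, hk, l, hl, rfl⟩ := Set.mem_add.mp hz
  simp only [inner_add_right]
  exact add_le_add (hKub ⟨k, hk, rfl⟩) (hLub ⟨l, hl, rfl⟩)

lemma supF_smul {K : Set (EuclideanSpace ℝ (Fin N))} (hK : IsCompact K) (hKne : K.Nonempty)
    {c : ℝ} (hc : 0 ≤ c) (x : EuclideanSpace ℝ (Fin N)) :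
    supF (c • K) x = c * supF K x := by
  obtain ⟨⟨yK, hyK, hK2⟩, hKub⟩ := isGreatest_supF hK hKne x
  refine IsGreatest.csSup_eq ⟨⟨c • yK, Set.smul_mem_smul_set hyK, by
      simp only [real_inner_smul_right]; rw [show (inner ℝ x yK : ℝ) = supF K x from hK2]⟩, ?_⟩
  rintro _ ⟨z, hz, rfl⟩
  obtain ⟨k, hk, rfl⟩ := hz
  simp only [real_inner_smul_right]
  exact mul_le_mul_of_nonneg_left (hKub ⟨k, hk, rfl⟩) hc

lemma supF_max {K L : Set (EuclideanSpace ℝ (Fin N))} (hK : IsCompact K) (hKne : K.Nonempty)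
    (hL : IsCompact L) (hLne : L.Nonempty) (x : EuclideanSpace ℝ (Fin N)) :
    supF (closure (convexHull ℝ (K ∪ L))) x = max (supF K x) (supF L x) := by
  obtain ⟨⟨yK, hyK, hK2⟩, hKub⟩ := isGreatest_supF hK hKne x
  obtain ⟨⟨yL, hyL, hL2⟩, hLub⟩ := isGreatest_supF hL hLne x
  set m := max (supF K x) (supF L x) with hm
  have hsub : K ∪ L ⊆ closure (convexHull ℝ (K ∪ L)) :=
    (subset_convexHull ℝ _).trans subset_closure
  refine IsGreatest.csSup_eq ⟨?_, ?_⟩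
  · rcases le_total (supF K x) (supF L x) with h | h
    · exact ⟨yL, hsub (Or.inr hyL), by rw [hL2, hm, max_eq_right h]⟩
    · exact ⟨yK, hsub (Or.inl hyK), by rw [hK2, hm, max_eq_left h]⟩
  · rintro _ ⟨z, hz, rfl⟩
    have hhalf : Convex ℝ {y : EuclideanSpace ℝ (Fin N) | ⟪x, y⟫ ≤ m} :=
      convex_halfSpace_le ⟨fun a b => inner_add_right _ _ _, fun c a => real_inner_smul_right _ _ _⟩ m
    have hclosed : IsClosed {y : EuclideanSpace ℝ (Fin N) | ⟪x, y⟫ ≤ m} :=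
      isClosed_le (continuous_const.inner continuous_id) continuous_const
    have hsubset : closure (convexHull ℝ (K ∪ L)) ⊆ {y | ⟪x, y⟫ ≤ m} := by
      refine closure_minimal (convexHull_min ?_ hhalf) hclosed
      rintro y (hy | hy)
      · exact le_trans (hKub ⟨y, hy, rfl⟩) (le_max_left _ _)
      · exact le_trans (hLub ⟨y, hy, rfl⟩) (le_max_right _ _)
    exact hsubset hz

lemma supF_singleton (y x : EuclideanSpace ℝ (Fin N)) : supF {y} x = ⟪x, y⟫ := by
  simp [supF]

lemma supF_closedBall {c : ℝ} (hc : 0 ≤ c) {x : EuclideanSpace ℝ (Fin N)} (hx : ‖x‖ = 1) :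
    supF (Metric.closedBall 0 c) x = c := by
  refine IsGreatest.csSup_eq ⟨⟨c • x, ?_, ?_⟩, ?_⟩
  · simp [mem_closedBall, dist_eq_norm, norm_smul, hx, abs_of_nonneg hc]
  · simp only [real_inner_smul_right]
    rw [real_inner_self_eq_norm_sq, hx]; ring
  · rintro _ ⟨z, hz, rfl⟩
    calc ⟪x, z⟫ ≤ ‖x‖ * ‖z‖ := real_inner_le_norm x z
    _ ≤ 1 * c := by
        apply mul_le_mul (le_of_eq hx) _ (norm_nonneg z) zero_le_one
        simpa [dist_eq_norm] using mem_closedBall_zero_iff.mp hz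
    _ = c := one_mul c

lemma continuous_supF {K : Set (EuclideanSpace ℝ (Fin N))} (hK : IsCompact K)
    (hne : K.Nonempty) : Continuous (supF K) := by
  obtain ⟨R, hR0, hR⟩ : ∃ R, 0 ≤ R ∧ ∀ y ∈ K, ‖y‖ ≤ R := by
    obtain ⟨R, hR⟩ := hK.isBounded.exists_norm_le
    exact ⟨max R 0, le_max_right _ _, fun y hy => (hR y hy).trans (le_max_left _ _)⟩
  have key : ∀ x x' : EuclideanSpace ℝ (Fin N), supF K x - supF K x' ≤ R * ‖x - x'‖ := by
    intro x x'
    obtain ⟨⟨y, hy, h2⟩, -⟩ := isGreatest_supF hK hne x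
    have h3 : ⟪x, y⟫ - ⟪x', y⟫ ≤ R * ‖x - x'‖ := by
      rw [← inner_sub_left]
      calc ⟪x - x', y⟫ ≤ ‖x - x'‖ * ‖y‖ := real_inner_le_norm _ _
      _ ≤ ‖x - x'‖ * R := mul_le_mul_of_nonneg_left (hR y hy) (norm_nonneg _)
      _ = R * ‖x - x'‖ := mul_comm _ _
    have h4 : ⟪x', y⟫ ≤ supF K x' := le_supF hK hy
    rw [← h2]; linarith
  have : LipschitzWith R.toNNReal (supF K) := by
    refine LipschitzWith.of_dist_le_mul fun x x' => ?_
    rw [Real.dist_eq, dist_eq_norm, abs_sub_le_iff, Real.coe_toNNReal R hR0]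
    constructor
    · exact key x x'
    · simpa [norm_sub_rev] using key x' x
  exact this.continuous

noncomputable def supC (K : Set (EuclideanSpace ℝ (Fin N))) (hK : IsCompact K)
    (hne : K.Nonempty) : C(Metric.sphere (0 : EuclideanSpace ℝ (Fin N)) 1, ℝ) :=
  ⟨fun x => supF K (x : EuclideanSpace ℝ (Fin N)),
    (continuous_supF hK hne).comp continuous_subtype_val⟩

def G (N : ℕ) : Set C(Metric.sphere (0 : EuclideanSpace ℝ (Fin N)) 1, ℝ) :=
  {g | ∃ K : Set (EuclideanSpace ℝ (Fin N)),
    K.Nonempty ∧ IsCompact K ∧ Convex ℝ K ∧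
    ∀ x : Metric.sphere (0 : EuclideanSpace ℝ (Fin N)) 1,
      g x = sSup ((fun y => ⟪(x : EuclideanSpace ℝ (Fin N)), y⟫) '' K)}

lemma supC_mem_G {K : Set (EuclideanSpace ℝ (Fin N))} (hK : IsCompact K)
    (hne : K.Nonempty) (hconv : Convex ℝ K) : supC K hK hne ∈ G N :=
  ⟨K, hne, hK, hconv, fun _ => rfl⟩

def Rep (g : C(Metric.sphere (0 : EuclideanSpace ℝ (Fin N)) 1, ℝ)) : Prop :=
  ∃ K L : Set (EuclideanSpace ℝ (Fin N)),
    K.Nonempty ∧ IsCompact K ∧ Convex ℝ K ∧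
    L.Nonempty ∧ IsCompact L ∧ Convex ℝ L ∧
    ∀ x : Metric.sphere (0 : EuclideanSpace ℝ (Fin N)) 1,
      g x = supF K (x : EuclideanSpace ℝ (Fin N)) - supF L (x : EuclideanSpace ℝ (Fin N))

lemma rep_of_mem_span {g : C(Metric.sphere (0 : EuclideanSpace ℝ (Fin N)) 1, ℝ)}
    (hg : g ∈ Submodule.span ℝ (G N)) : Rep g := by
  induction hg using Submodule.span_induction with
  | mem g hgG =>
    obtain ⟨K, hne, hK, hconv, hval⟩ := hgG
    exact ⟨K, {0}, hne, hK, hconv, ⟨0, rfl⟩, isCompact_singleton, convex_singleton 0,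
      fun x => by rw [hval x, supF_singleton, inner_zero_right, sub_zero]; rfl⟩
  | zero =>
    exact ⟨{0}, {0}, ⟨0, rfl⟩, isCompact_singleton, convex_singleton 0,
      ⟨0, rfl⟩, isCompact_singleton, convex_singleton 0,
      fun x => by simp [supF_singleton]⟩
  | add f g hf hg ihf ihg =>
    obtain ⟨K₁, L₁, hKne₁, hK₁, hKc₁, hLne₁, hL₁, hLc₁, hval₁⟩ := ihf
    obtain ⟨K₂, L₂, hKne₂, hK₂, hKc₂, hLne₂, hL₂, hLc₂, hval₂⟩ := ihg
    refine ⟨K₁ + K₂, L₁ + L₂, hKne₁.add hKne₂, hK₁.add hK₂, hKc₁.add hKc₂,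
      hLne₁.add hLne₂, hL₁.add hL₂, hLc₁.add hLc₂, fun x => ?_⟩
    rw [supF_add hK₁ hKne₁ hK₂ hKne₂, supF_add hL₁ hLne₁ hL₂ hLne₂,
      ContinuousMap.add_apply, hval₁ x, hval₂ x]
    ring
  | smul a g hgmem ih =>
    obtain ⟨K, L, hKne, hK, hKc, hLne, hL, hLc, hval⟩ := ih
    rcases le_or_gt 0 a with ha | ha
    · refine ⟨a • K, a • L, hKne.smul_set, hK.smul a, hKc.smul a,
        hLne.smul_set, hL.smul a, hLc.smul a, fun x => ?_⟩
      rw [supF_smul hK hKne ha, supF_smul hL hLne ha, ContinuousMap.smul_apply, hval x,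
        smul_eq_mul]
      ring
    · have ha' : 0 ≤ -a := by linarith
      refine ⟨(-a) • L, (-a) • K, hLne.smul_set, hL.smul (-a), hLc.smul (-a),
        hKne.smul_set, hK.smul (-a), hKc.smul (-a), fun x => ?_⟩
      rw [supF_smul hL hLne ha', supF_smul hK hKne ha', ContinuousMap.smul_apply, hval x,
        smul_eq_mul]
      ring

lemma mem_span_of_rep {g : C(Metric.sphere (0 : EuclideanSpace ℝ (Fin N)) 1, ℝ)}
    (hg : Rep g) : g ∈ Submodule.span ℝ (G N) := by
  obtain ⟨K, L, hKne, hK, hKc, hLne, hL, hLc, hval⟩ := hg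
  have : g = supC K hK hKne - supC L hL hLne := by
    ext x; simpa [supC] using hval x
  rw [this]
  exact sub_mem (Submodule.subset_span (supC_mem_G hK hKne hKc))
    (Submodule.subset_span (supC_mem_G hL hLne hLc))

lemma rep_sup {g₁ g₂ : C(Metric.sphere (0 : EuclideanSpace ℝ (Fin N)) 1, ℝ)}
    (h₁ : Rep g₁) (h₂ : Rep g₂) : Rep (g₁ ⊔ g₂) := by
  obtain ⟨K₁, L₁, hKne₁, hK₁, hKc₁, hLne₁, hL₁, hLc₁, hval₁⟩ := h₁
  obtain ⟨K₂, L₂, hKne₂, hK₂, hKc₂, hLne₂, hL₂, hLc₂, hval₂⟩ := h₂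
  set P₁ := K₁ + L₂ with hP₁
  set P₂ := K₂ + L₁ with hP₂
  have hPne₁ : P₁.Nonempty := hKne₁.add hLne₂
  have hPne₂ : P₂.Nonempty := hKne₂.add hLne₁
  have hPc₁ : IsCompact P₁ := hK₁.add hL₂
  have hPc₂ : IsCompact P₂ := hK₂.add hL₁
  set A := closure (convexHull ℝ (P₁ ∪ P₂)) with hA
  have hAne : A.Nonempty := hPne₁.mono ((subset_union_left.trans
    (subset_convexHull ℝ _)).trans subset_closure)
  have hAc : IsCompact A := Metric.isCompact_of_isClosed_isBounded isClosed_closure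
    ((isBounded_convexHull.mpr ((hPc₁.isBounded).union (hPc₂.isBounded))).closure)
  have hAconv : Convex ℝ A := (convex_convexHull ℝ _).closure
  refine ⟨A, L₁ + L₂, hAne, hAc, hAconv, hLne₁.add hLne₂, hL₁.add hL₂, hLc₁.add hLc₂,
    fun x => ?_⟩
  rw [ContinuousMap.sup_apply, hval₁ x, hval₂ x, hA,
    supF_max hPc₁ hPne₁ hPc₂ hPne₂, hP₁, hP₂,
    supF_add hK₁ hKne₁ hL₂ hLne₂, supF_add hK₂ hKne₂ hL₁ hLne₁,
    supF_add hL₁ hLne₁ hL₂ hLne₂]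
  set a₁ := supF K₁ (x : EuclideanSpace ℝ (Fin N))
  set a₂ := supF K₂ (x : EuclideanSpace ℝ (Fin N))
  set b₁ := supF L₁ (x : EuclideanSpace ℝ (Fin N))
  set b₂ := supF L₂ (x : EuclideanSpace ℝ (Fin N))
  rcases le_total (a₁ - b₁) (a₂ - b₂) with h | h
  · rw [sup_eq_right.mpr h, max_eq_right (by linarith)]; ring
  · rw [sup_eq_left.mpr h, max_eq_left (by linarith)]; ring

lemma const_one_mem : (ContinuousMap.const (Metric.sphere (0 : EuclideanSpace ℝ (Fin N)) 1)
    (1 : ℝ)) ∈ G N := by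
  refine ⟨Metric.closedBall 0 1, ⟨0, Metric.mem_closedBall_self zero_le_one⟩,
    isCompact_closedBall 0 1, convex_closedBall 0 1, fun x => ?_⟩
  have hx : ‖(x : EuclideanSpace ℝ (Fin N))‖ = 1 := by
    simp only [← mem_sphere_zero_iff_norm]; exact x.2
  exact (supF_closedBall zero_le_one hx).symm

lemma const_mem (c : ℝ) : (ContinuousMap.const (Metric.sphere (0 : EuclideanSpace ℝ (Fin N)) 1)
    c) ∈ Submodule.span ℝ (G N) := by
  have : (ContinuousMap.const (Metric.sphere (0 : EuclideanSpace ℝ (Fin N)) 1) c)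
      = c • (ContinuousMap.const _ (1 : ℝ)) := by ext x; simp
  rw [this]
  exact Submodule.smul_mem _ c (Submodule.subset_span const_one_mem)

lemma lin_mem (y₀ : EuclideanSpace ℝ (Fin N)) :
    (⟨fun x : Metric.sphere (0 : EuclideanSpace ℝ (Fin N)) 1 =>
        ⟪(x : EuclideanSpace ℝ (Fin N)), y₀⟫,
      (continuous_id.inner continuous_const).comp continuous_subtype_val⟩ :
      C(Metric.sphere (0 : EuclideanSpace ℝ (Fin N)) 1, ℝ)) ∈ G N := by
  exact ⟨{y₀}, ⟨y₀, rfl⟩, isCompact_singleton, convex_singleton y₀,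
    fun x => (supF_singleton y₀ (x : EuclideanSpace ℝ (Fin N))).symm⟩

lemma separates : (↑(Submodule.span ℝ (G N)) :
    Set C(Metric.sphere (0 : EuclideanSpace ℝ (Fin N)) 1, ℝ)).SeparatesPointsStrongly := by
  intro v x y
  by_cases hxy : x = y
  · subst hxy
    exact ⟨ContinuousMap.const _ (v x), const_mem (v x), rfl, rfl⟩
  · set d : EuclideanSpace ℝ (Fin N) := (x : EuclideanSpace ℝ (Fin N)) - y with hd
    have hd0 : d ≠ 0 := sub_ne_zero.mpr (fun h => hxy (Subtype.coe_injective h))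
    set ℓ : C(Metric.sphere (0 : EuclideanSpace ℝ (Fin N)) 1, ℝ) :=
      ⟨fun z : Metric.sphere (0 : EuclideanSpace ℝ (Fin N)) 1 =>
        ⟪(z : EuclideanSpace ℝ (Fin N)), d⟫,
        (continuous_id.inner continuous_const).comp continuous_subtype_val⟩ with hℓ
    have hℓmem : ℓ ∈ Submodule.span ℝ (G N) := Submodule.subset_span (lin_mem d)
    have hdiff : ℓ x - ℓ y = ‖d‖ ^ 2 := by
      show ⟪(x : EuclideanSpace ℝ (Fin N)), d⟫ - ⟪(y : EuclideanSpace ℝ (Fin N)), d⟫ = ‖d‖ ^ 2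
      rw [← inner_sub_left, ← hd, real_inner_self_eq_norm_sq]
    have hpos : (0 : ℝ) < ‖d‖ ^ 2 := by
      have := norm_pos_iff.mpr hd0
      positivity
    set a : ℝ := (v x - v y) / ‖d‖ ^ 2 with ha
    refine ⟨a • ℓ + ContinuousMap.const _ (v x - a * ℓ x),
      add_mem (Submodule.smul_mem _ a hℓmem) (const_mem _), ?_, ?_⟩
    · simp only [ContinuousMap.add_apply, ContinuousMap.smul_apply, ContinuousMap.const_apply,
        smul_eq_mul]
      ring
    · simp only [ContinuousMap.add_apply, ContinuousMap.smul_apply, ContinuousMap.const_apply,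
        smul_eq_mul]
      have : a * ℓ y - a * ℓ x = -(v x - v y) := by
        rw [← mul_sub, ← neg_sub (ℓ x) (ℓ y), mul_neg, hdiff, ha,
          div_mul_cancel₀ _ (ne_of_gt hpos)]
      linarith

lemma main_dense : Dense (↑(Submodule.span ℝ (G N)) :
    Set C(Metric.sphere (0 : EuclideanSpace ℝ (Fin N)) 1, ℝ)) := by
  have sup_mem : ∀ f ∈ (↑(Submodule.span ℝ (G N)) :
      Set C(Metric.sphere (0 : EuclideanSpace ℝ (Fin N)) 1, ℝ)),
      ∀ g ∈ (↑(Submodule.span ℝ (G N)) :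
      Set C(Metric.sphere (0 : EuclideanSpace ℝ (Fin N)) 1, ℝ)), f ⊔ g ∈
      (↑(Submodule.span ℝ (G N)) :
      Set C(Metric.sphere (0 : EuclideanSpace ℝ (Fin N)) 1, ℝ)) := fun f hf g hg =>
    mem_span_of_rep (rep_sup (rep_of_mem_span hf) (rep_of_mem_span hg))
  have inf_mem : ∀ f ∈ (↑(Submodule.span ℝ (G N)) :
      Set C(Metric.sphere (0 : EuclideanSpace ℝ (Fin N)) 1, ℝ)),
      ∀ g ∈ (↑(Submodule.span ℝ (G N)) :
      Set C(Metric.sphere (0 : EuclideanSpace ℝ (Fin N)) 1, ℝ)), f ⊓ g ∈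
      (↑(Submodule.span ℝ (G N)) :
      Set C(Metric.sphere (0 : EuclideanSpace ℝ (Fin N)) 1, ℝ)) := by
    intro f hf g hg
    have : f ⊓ g = -((-f) ⊔ (-g)) := by rw [neg_sup, neg_neg, neg_neg]
    rw [this]
    exact neg_mem (sup_mem _ (neg_mem hf) _ (neg_mem hg))
  have := ContinuousMap.sublattice_closure_eq_top
    (↑(Submodule.span ℝ (G N)) :
      Set C(Metric.sphere (0 : EuclideanSpace ℝ (Fin N)) 1, ℝ))
    ⟨0, Submodule.zero_mem _⟩ inf_mem sup_mem separates
  rw [dense_iff_closure_eq, this]; rfl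

end SupportFnAux

open SupportFnAux in
/-- The linear span of the restrictions to the unit sphere `S_{N-1}` of support functions
of nonempty compact convex subsets of `ℝ^N` is dense in `C(S_{N-1})`; equivalently, every
continuous function on the sphere is a uniform limit of differences of restrictions of
support functions of convex bodies. -/
theorem span_supportFunctions_dense {N : ℕ} :
    Dense (↑(Submodule.span ℝ
      {g : C(Metric.sphere (0 : EuclideanSpace ℝ (Fin N)) 1, ℝ) |
        ∃ K : Set (EuclideanSpace ℝ (Fin N)),
          K.Nonempty ∧ IsCompact K ∧ Convex ℝ K ∧
          ∀ x : Metric.sphere (0 : EuclideanSpace ℝ (Fin N)) 1,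
            g x = sSup ((fun y => ⟪(x : EuclideanSpace ℝ (Fin N)), y⟫) '' K)}) :
      Set C(Metric.sphere (0 : EuclideanSpace ℝ (Fin N)) 1, ℝ)) ∧
    ∀ f : Metric.sphere (0 : EuclideanSpace ℝ (Fin N)) 1 → ℝ, Continuous f →
      ∀ ε : ℝ, 0 < ε →
        ∃ K L : Set (EuclideanSpace ℝ (Fin N)),
          K.Nonempty ∧ IsCompact K ∧ Convex ℝ K ∧
          L.Nonempty ∧ IsCompact L ∧ Convex ℝ L ∧
          ∀ x : Metric.sphere (0 : EuclideanSpace ℝ (Fin N)) 1,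
            |f x - (sSup ((fun y => ⟪(x : EuclideanSpace ℝ (Fin N)), y⟫) '' K)
                  - sSup ((fun y => ⟪(x : EuclideanSpace ℝ (Fin N)), y⟫) '' L))| ≤ ε := by
  have hG : {g : C(Metric.sphere (0 : EuclideanSpace ℝ (Fin N)) 1, ℝ) |
        ∃ K : Set (EuclideanSpace ℝ (Fin N)),
          K.Nonempty ∧ IsCompact K ∧ Convex ℝ K ∧
          ∀ x : Metric.sphere (0 : EuclideanSpace ℝ (Fin N)) 1,
            g x = sSup ((fun y => ⟪(x : EuclideanSpace ℝ (Fin N)), y⟫) '' K)} = G N := rfl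
  rw [hG]
  refine ⟨main_dense, fun f hf ε hε => ?_⟩
  set fC : C(Metric.sphere (0 : EuclideanSpace ℝ (Fin N)) 1, ℝ) := ⟨f, hf⟩ with hfC
  have hmem : fC ∈ closure (↑(Submodule.span ℝ (G N)) :
      Set C(Metric.sphere (0 : EuclideanSpace ℝ (Fin N)) 1, ℝ)) := by
    rw [main_dense.closure_eq]; trivial
  obtain ⟨g, hg, hdist⟩ := Metric.mem_closure_iff.mp hmem ε hε
  obtain ⟨K, L, hKne, hK, hKc, hLne, hL, hLc, hval⟩ := rep_of_mem_span hg
  refine ⟨K, L, hKne, hK, hKc, hLne, hL, hLc, fun x => ?_⟩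
  have h1 : sSup ((fun y => ⟪(x : EuclideanSpace ℝ (Fin N)), y⟫) '' K)
      - sSup ((fun y => ⟪(x : EuclideanSpace ℝ (Fin N)), y⟫) '' L) = g x := (hval x).symm
  rw [h1]
  have h2 : |f x - g x| = dist (fC x) (g x) := by rw [Real.dist_eq]; rfl
  rw [h2]
  exact le_of_lt (lt_of_le_of_lt (ContinuousMap.dist_apply_le_dist x) hdist)
end

section
/- Let X be a real inner product space, let K ⊆ X be a convex cone containing 0, and let x̄ ∈ K. Then the dual cone of the cone of feasible directions Fd(K, x̄) = {h ∈ X : ∃ α ≥ 0, x̄ + α h ∈ K} equals the intersection of the dual cone of K with the hyperplane orthogonal to x̄: {y ∈ X : ⟨h, y⟩ ≥ 0 for all h ∈ Fd(K, x̄)} = {y ∈ X : ⟨k, y⟩ ≥ 0 for all k ∈ K, and ⟨x̄, y⟩ = 0}. -/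
open RealInnerProductSpace

/-- Let `X` be a real inner product space, `K ⊆ X` a convex cone containing `0`, and
`xbar ∈ K`.  The dual cone of the cone of feasible directions
`Fd(K, xbar) = {h : ∃ α > 0, xbar + α • h ∈ K} ∪ {0}` equals the intersection of the dual cone
of `K` with the hyperplane orthogonal to `xbar`. -/
theorem dualCone_feasibleDirections
    {X : Type*} [NormedAddCommGroup X] [InnerProductSpace ℝ X]
    (K : Set X) (hKconv : Convex ℝ K) (h0 : 0 ∈ K)
    (hKsmul : ∀ c : ℝ, 0 ≤ c → ∀ x ∈ K, c • x ∈ K)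
    (xbar : X) (hxbar : xbar ∈ K) :
    {y : X | ∀ h ∈ ({h : X | ∃ α : ℝ, 0 < α ∧ xbar + α • h ∈ K} ∪ {0} : Set X),
        0 ≤ ⟪h, y⟫}
      = {y : X | (∀ k ∈ K, 0 ≤ ⟪k, y⟫) ∧ ⟪xbar, y⟫ = 0} := by
  ext y
  simp only [Set.mem_setOf_eq, Set.mem_union, Set.mem_singleton_iff]
  constructor
  · intro hy
    have hneg : 0 ≤ ⟪-xbar, y⟫ := by
      apply hy
      left
      exact ⟨1, one_pos, by simp [h0]⟩
    have hpos : 0 ≤ ⟪xbar, y⟫ := by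
      apply hy
      left
      refine ⟨1, one_pos, ?_⟩
      have := hKsmul 2 (by norm_num) xbar hxbar
      convert this using 1
      simp [two_smul]
    have hx0 : ⟪xbar, y⟫ = 0 := by
      rw [inner_neg_left] at hneg; linarith
    refine ⟨fun k hk => ?_, hx0⟩
    have hfeas : 0 ≤ ⟪k - xbar, y⟫ := by
      apply hy
      left
      exact ⟨1, one_pos, by simpa using hk⟩
    rw [inner_sub_left] at hfeas
    linarith
  · rintro ⟨hK, hx0⟩ h (⟨α, hα, hmem⟩ | rfl)
    · have := hK _ hmem
      rw [inner_add_left, real_inner_smul_left, hx0] at this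
      nlinarith
    · simp
end
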